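/- arXiv:math/0503014 — 5 statements merged into one kernel-verified Lean document; each statement's English description precedes it below -/
import Mathlib

section
/- Generalized von Neumann theorem: Let k ≥ 2, let G be a finite additive (abelian) group with |G| = N satisfying gcd(N, (k−1)!) = 1, and let f₀, …, f_{k−1} : G → 𝒟 be functions. Then |Λ_k(f₀,…,f_{k−1})| ≤ min_{0 ≤ j ≤ k−1} ‖f_j‖_{U^{k−1}(G)}, where Λ_k(f₀,…,f_{k−1}) := 𝔼_{x,r∈G} f₀(x) f₁(x+r) ⋯ f_{k−1}(x+(k−1)r). -/
open Finset Function
open scoped BigOperators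

namespace VNaux

universe u

lemma conj_iter_mul (n : ℕ) : ∀ a b : ℂ,
    (starRingEnd ℂ)^[n] (a * b) = (starRingEnd ℂ)^[n] a * (starRingEnd ℂ)^[n] b := by
  induction n with
  | zero => intro a b; rfl
  | succ n ih => intro a b; simp only [Function.iterate_succ_apply, map_mul, ih]

lemma cs_expect {ι : Type*} [Fintype ι] (A B : ι → ℂ) :
    norm (𝔼 i, A i * B i) ^ 2
      ≤ (𝔼 i, norm (A i) ^ 2) * (𝔼 i, norm (B i) ^ 2) := by
  have h1 : norm (𝔼 i, A i * B i) ≤ 𝔼 i, norm (A i) * norm (B i) := by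
    simpa using
      (RCLike.norm_expect_le (K := ℂ) (s := (univ : Finset ι)) (f := fun i => A i * B i))
  calc norm (𝔼 i, A i * B i) ^ 2
      ≤ (𝔼 i, norm (A i) * norm (B i)) ^ 2 := by
        apply pow_le_pow_left₀ (norm_nonneg _) h1
    _ ≤ _ := Finset.expect_mul_sq_le_sq_mul_sq _ _ _

lemma conj_expect {ι : Type*} [Fintype ι] (f : ι → ℂ) :
    (starRingEnd ℂ) (𝔼 i, f i) = 𝔼 i, (starRingEnd ℂ) (f i) := by
  rw [Finset.expect_eq_sum_div_card, Finset.expect_eq_sum_div_card, map_div₀, map_sum]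
  simp

lemma ofReal_expect' {ι : Type*} [Fintype ι] (f : ι → ℝ) :
    ((𝔼 i, f i : ℝ) : ℂ) = 𝔼 i, (f i : ℂ) := by
  rw [Finset.expect_eq_sum_div_card, Finset.expect_eq_sum_div_card]
  push_cast
  rfl

lemma expect_split {α β : Type*} [Fintype α] [Fintype β] (g : α × β → ℂ) :
    𝔼 p : α × β, g p = 𝔼 a : α, 𝔼 b : β, g (a, b) := by
  rw [← Finset.univ_product_univ, Finset.expect_product]

lemma expect_cons {G : Type u} [AddCommGroup G] [Fintype G] {d : ℕ}
    (g : (Fin (d+1) → G) → ℂ) :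
    𝔼 y : Fin (d+1) → G, g y = 𝔼 t : G, 𝔼 z : Fin d → G, g (Fin.cons t z) := by
  rw [← Fintype.expect_equiv (Fin.consEquiv fun _ => G)
    (fun p => g (Fin.cons p.1 p.2)) g (fun p => rfl)]
  exact expect_split _

lemma prod_bool_cons {d : ℕ} (g : (Fin (d+1) → Bool) → ℂ) :
    ∏ ω : Fin (d+1) → Bool, g ω
      = ∏ ω : Fin d → Bool, (g (Fin.cons true ω) * g (Fin.cons false ω)) := by
  rw [← Fintype.prod_equiv (Fin.consEquiv fun _ => Bool)
    (fun p => g (Fin.cons p.1 p.2)) g (fun p => rfl)]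
  rw [Fintype.prod_prod_type, Fintype.prod_bool, ← Finset.prod_mul_distrib]

lemma card_filter_cons {d : ℕ} (b : Bool) (ω : Fin d → Bool) :
    (univ.filter fun m => (Fin.cons b ω : Fin (d+1) → Bool) m = true).card
      = (if b then 1 else 0) + (univ.filter fun m => ω m = true).card := by
  rw [Finset.card_filter, Finset.card_filter, Fin.sum_univ_succ]
  simp only [Fin.cons_zero, Fin.cons_succ]

lemma mix_cons {G : Type u} {d : ℕ} (b : Bool) (ω : Fin d → Bool) (t t' : G)
    (z z' : Fin d → G) :
    (fun m : Fin (d+1) =>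
        if (Fin.cons b ω : Fin (d+1) → Bool) m
          then (Fin.cons t' z' : Fin (d+1) → G) m else (Fin.cons t z : Fin (d+1) → G) m)
      = Fin.cons (if b then t' else t) (fun m => if ω m then z' m else z m) := by
  funext m
  refine Fin.cases ?_ (fun i => ?_) m <;> simp [Fin.cons_zero, Fin.cons_succ]

set_option maxHeartbeats 1600000 in
lemma lemB {G : Type u} [AddCommGroup G] [Fintype G] (d : ℕ) :
    ∀ (X : Type u) [Fintype X] (H : X → (Fin d → G) → ℂ)
      (F : Fin d → X → (Fin d → G) → ℂ),
      (∀ m x y, norm (F m x y) ≤ 1) →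
      (∀ m x y t, F m x (Function.update y m t) = F m x y) →
      norm (𝔼 x : X, 𝔼 y : Fin d → G, H x y * ∏ m, F m x y) ^ (2 ^ d)
        ≤ norm (𝔼 x : X, 𝔼 y : Fin d → G, 𝔼 y' : Fin d → G,
            ∏ ω : Fin d → Bool,
              (starRingEnd ℂ)^[(univ.filter fun m => ω m = true).card]
                (H x fun m => if ω m then y' m else y m)) := by
  induction d with
  | zero =>
    intro X _ H F hFbd hFind
    simp only [pow_zero, pow_one]
    apply le_of_eq
    apply congrArg
    refine Finset.expect_congr rfl fun x _ => Finset.expect_congr rfl fun y _ => ?_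
    have h2 : ∀ y' : Fin 0 → G,
        (∏ ω : Fin 0 → Bool,
          (starRingEnd ℂ)^[(univ.filter fun m => ω m = true).card]
            (H x fun m => if ω m then y' m else y m)) = H x y := by
      intro y'
      have h3 : ∀ ω : Fin 0 → Bool,
          (starRingEnd ℂ)^[(univ.filter fun m => ω m = true).card]
            (H x fun m => if ω m then y' m else y m) = H x y := by
        intro ω
        simp only [Finset.univ_eq_empty, Finset.filter_empty, Finset.card_empty,
          Function.iterate_zero, id_eq]
        congr 1
        funext m; exact m.elim0
      rw [Finset.prod_congr rfl fun ω _ => h3 ω, Finset.prod_const]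
      have h4 : (univ : Finset (Fin 0 → Bool)).card = 1 := by
        rw [Finset.card_univ]; simp
      rw [h4, pow_one]
    rw [Finset.expect_congr rfl fun y' _ => h2 y']
    simp
  | succ d ih =>
    intro X _ H F hFbd hFind
    obtain hX | hX := isEmpty_or_nonempty X
    · simp only [Finset.univ_eq_empty, Finset.expect_empty, map_zero, norm_zero]
      rw [zero_pow (by positivity)]
    have hGne : Nonempty G := ⟨0⟩
    set A : X × (Fin d → G) → ℂ := fun p =>
      𝔼 t : G, H p.1 (Fin.cons t p.2) * ∏ m : Fin d, F m.succ p.1 (Fin.cons t p.2) with hA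
    set B : X × (Fin d → G) → ℂ := fun p => F 0 p.1 (Fin.cons 0 p.2) with hB
    set H' : (X × G) × G → (Fin d → G) → ℂ := fun q z =>
      H q.1.1 (Fin.cons q.1.2 z) * (starRingEnd ℂ) (H q.1.1 (Fin.cons q.2 z)) with hH'
    set F' : Fin d → (X × G) × G → (Fin d → G) → ℂ := fun m q z =>
      F m.succ q.1.1 (Fin.cons q.1.2 z)
        * (starRingEnd ℂ) (F m.succ q.1.1 (Fin.cons q.2 z)) with hF'
    have hA0 : (0:ℝ) ≤ 𝔼 p : X × (Fin d → G), norm (A p) ^ 2 :=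
      Finset.expect_nonneg fun p _ => sq_nonneg _
    -- step 1
    have step1 : (𝔼 x : X, 𝔼 y : Fin (d+1) → G, H x y * ∏ m, F m x y)
        = 𝔼 p : X × (Fin d → G), A p * B p := by
      rw [expect_split]
      refine Finset.expect_congr rfl fun x _ => ?_
      rw [expect_cons, Finset.expect_comm]
      refine Finset.expect_congr rfl fun z _ => ?_
      have h1 : ∀ t : G, H x (Fin.cons t z) * ∏ m, F m x (Fin.cons t z)
          = (H x (Fin.cons t z) * ∏ m : Fin d, F m.succ x (Fin.cons t z))
              * F 0 x (Fin.cons 0 z) := by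
        intro t
        rw [Fin.prod_univ_succ]
        have h2 : F 0 x (Fin.cons 0 z) = F 0 x (Fin.cons t z) := by
          have h3 := hFind 0 x (Fin.cons t z) 0
          rwa [Fin.update_cons_zero] at h3
        rw [h2]; ring
      rw [Finset.expect_congr rfl fun t _ => h1 t, Finset.expect_mul]
    -- step 2
    have step2 : norm (𝔼 p : X × (Fin d → G), A p * B p) ^ 2
        ≤ 𝔼 p : X × (Fin d → G), norm (A p) ^ 2 := by
      refine (cs_expect A B).trans ?_
      have hB1 : (𝔼 p : X × (Fin d → G), norm (B p) ^ 2) ≤ 1 := by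
        refine Finset.expect_le univ_nonempty fun p _ => ?_
        calc norm (B p) ^ 2 ≤ 1 ^ 2 :=
              pow_le_pow_left₀ (norm_nonneg _) (hFbd 0 p.1 (Fin.cons 0 p.2)) 2
          _ = 1 := one_pow 2
      exact mul_le_of_le_one_right hA0 hB1
    -- step 3
    have step3 : ((𝔼 p : X × (Fin d → G), norm (A p) ^ 2 : ℝ) : ℂ)
        = 𝔼 q : (X × G) × G, 𝔼 z : Fin d → G, H' q z * ∏ m, F' m q z := by
      rw [ofReal_expect']
      have h1 : ∀ p : X × (Fin d → G), ((norm (A p) ^ 2 : ℝ) : ℂ)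
          = A p * (starRingEnd ℂ) (A p) := by
        intro p
        rw [Complex.sq_norm]
        exact (Complex.mul_conj _).symm
      rw [Finset.expect_congr rfl fun p _ => h1 p]
      have h2 : ∀ p : X × (Fin d → G), A p * (starRingEnd ℂ) (A p)
          = 𝔼 t : G, 𝔼 t' : G,
              ((H p.1 (Fin.cons t p.2) * ∏ m : Fin d, F m.succ p.1 (Fin.cons t p.2))
              * (starRingEnd ℂ)
                (H p.1 (Fin.cons t' p.2)
                  * ∏ m : Fin d, F m.succ p.1 (Fin.cons t' p.2))) := by
        intro p
        rw [hA, conj_expect]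
        exact Fintype.expect_mul_expect _ _
      rw [Finset.expect_congr rfl fun p _ => h2 p]
      rw [expect_split, expect_split, expect_split]
      refine Finset.expect_congr rfl fun x _ => ?_
      rw [Finset.expect_comm]
      refine Finset.expect_congr rfl fun t _ => ?_
      rw [Finset.expect_comm]
      refine Finset.expect_congr rfl fun t' _ => ?_
      refine Finset.expect_congr rfl fun z _ => ?_
      rw [hH', hF']
      simp only
      rw [map_mul, map_prod, Finset.prod_mul_distrib]
      ring
    -- step 4 : apply induction hypothesis
    have step4 : norm (𝔼 q : (X × G) × G, 𝔼 z : Fin d → G,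
          H' q z * ∏ m, F' m q z) ^ 2 ^ d
        ≤ norm (𝔼 q : (X × G) × G, 𝔼 z : Fin d → G, 𝔼 z' : Fin d → G,
            ∏ ω : Fin d → Bool,
              (starRingEnd ℂ)^[(univ.filter fun m => ω m = true).card]
                (H' q fun m => if ω m then z' m else z m)) := by
      refine ih ((X × G) × G) H' F' ?_ ?_
      · intro m q z
        rw [hF']
        simp only [norm_mul]
        calc norm (F m.succ q.1.1 (Fin.cons q.1.2 z))
              * norm ((starRingEnd ℂ) (F m.succ q.1.1 (Fin.cons q.2 z)))
            ≤ 1 * 1 := by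
              refine mul_le_mul (hFbd _ _ _) ?_ (norm_nonneg _) zero_le_one
              rw [Complex.norm_conj]
              exact hFbd _ _ _
          _ = 1 := mul_one 1
      · intro m q z t0
        rw [hF']
        simp only
        rw [Fin.cons_update, Fin.cons_update, hFind, hFind]
    -- step 5 : identify boxes
    have key : ∀ (x : X) (t t' : G) (z z' : Fin d → G),
        (∏ ω : Fin (d+1) → Bool,
          (starRingEnd ℂ)^[(univ.filter fun m => ω m = true).card]
            (H x fun m => if ω m then (Fin.cons t' z' : Fin (d+1) → G) m
              else (Fin.cons t z : Fin (d+1) → G) m))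
        = ∏ ω : Fin d → Bool,
            (starRingEnd ℂ)^[(univ.filter fun m => ω m = true).card]
              (H' ((x, t), t') fun m => if ω m then z' m else z m) := by
      intro x t t' z z'
      rw [prod_bool_cons]
      refine Finset.prod_congr rfl fun ω _ => ?_
      rw [card_filter_cons, card_filter_cons, mix_cons, mix_cons]
      norm_num
      rw [add_comm 1, Function.iterate_succ_apply]
      rw [hH']
      simp only
      rw [conj_iter_mul]
      exact mul_comm _ _
    have step5 : (𝔼 x : X, 𝔼 y : Fin (d+1) → G, 𝔼 y' : Fin (d+1) → G,
          ∏ ω : Fin (d+1) → Bool,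
            (starRingEnd ℂ)^[(univ.filter fun m => ω m = true).card]
              (H x fun m => if ω m then y' m else y m))
        = 𝔼 q : (X × G) × G, 𝔼 z : Fin d → G, 𝔼 z' : Fin d → G,
            ∏ ω : Fin d → Bool,
              (starRingEnd ℂ)^[(univ.filter fun m => ω m = true).card]
                (H' q fun m => if ω m then z' m else z m) := by
      rw [expect_split, expect_split]
      refine Finset.expect_congr rfl fun x _ => ?_
      rw [expect_cons]
      refine Finset.expect_congr rfl fun t _ => ?_
      have e1 : ∀ z : Fin d → G,
          (𝔼 y' : Fin (d+1) → G,
            ∏ ω : Fin (d+1) → Bool,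
              (starRingEnd ℂ)^[(univ.filter fun m => ω m = true).card]
                (H x fun m => if ω m then y' m else (Fin.cons t z : Fin (d+1) → G) m))
          = 𝔼 t' : G, 𝔼 z' : Fin d → G,
              ∏ ω : Fin (d+1) → Bool,
                (starRingEnd ℂ)^[(univ.filter fun m => ω m = true).card]
                  (H x fun m => if ω m then (Fin.cons t' z' : Fin (d+1) → G) m
                    else (Fin.cons t z : Fin (d+1) → G) m) :=
        fun z => expect_cons _
      rw [Finset.expect_congr rfl fun z _ => e1 z, Finset.expect_comm]
      exact Finset.expect_congr rfl fun t' _ => Finset.expect_congr rfl fun z _ =>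
        Finset.expect_congr rfl fun z' _ => key x t t' z z'
    -- final chain
    calc norm (𝔼 x : X, 𝔼 y : Fin (d+1) → G, H x y * ∏ m, F m x y) ^ 2 ^ (d+1)
        = (norm (𝔼 p : X × (Fin d → G), A p * B p) ^ 2) ^ 2 ^ d := by
          rw [step1, pow_succ', pow_mul]
      _ ≤ (𝔼 p : X × (Fin d → G), norm (A p) ^ 2) ^ 2 ^ d := by
          exact pow_le_pow_left₀ (sq_nonneg _) step2 _
      _ = norm (((𝔼 p : X × (Fin d → G), norm (A p) ^ 2 : ℝ) : ℂ)) ^ 2 ^ d := by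
          rw [Complex.norm_real, Real.norm_of_nonneg hA0]
      _ = norm (𝔼 q : (X × G) × G, 𝔼 z : Fin d → G,
            H' q z * ∏ m, F' m q z) ^ 2 ^ d := by rw [step3]
      _ ≤ _ := by rw [step5]; exact step4


variable {G : Type u} [AddCommGroup G] [Fintype G]

lemma zsmul_bijective (c : ℤ) (hc : Nat.Coprime c.natAbs (Fintype.card G)) :
    Function.Bijective fun g : G => c • g := by
  rw [← Finite.injective_iff_bijective]
  have h0 : ∀ g : G, c • g = 0 → g = 0 := by
    intro g hg
    have h1 : (addOrderOf g : ℤ) ∣ c := addOrderOf_dvd_iff_zsmul_eq_zero.mpr hg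
    have h2 : addOrderOf g ∣ c.natAbs :=
      Int.natCast_dvd_natCast.mp (Int.dvd_natAbs.mpr h1)
    have h3 : addOrderOf g ∣ Fintype.card G := addOrderOf_dvd_card
    have h4 : addOrderOf g ∣ 1 := hc ▸ Nat.dvd_gcd h2 h3
    exact AddMonoid.addOrderOf_eq_one_iff.mp (Nat.dvd_one.mp h4)
  exact (injective_iff_map_eq_zero (zsmulAddGroupHom c : G →+ G)).mpr h0

section Main

variable {d : ℕ} (j : Fin (d+2))

/-- change of variables for the progression average -/
def phiEquiv (a : Fin (d+1) → Fin (d+2)) :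
    (G × (Fin (d+1) → G)) ≃ ((G × G) × (Fin d → G)) where
  toFun w := ((w.1 - ∑ m, ((a m : ℕ) : ℤ) • w.2 m, ∑ m, w.2 m), Fin.tail w.2)
  invFun q :=
    (q.1.1 + ∑ m, ((a m : ℕ) : ℤ) •
        (Fin.cons (q.1.2 - ∑ i, q.2 i) q.2 : Fin (d+1) → G) m,
      Fin.cons (q.1.2 - ∑ i, q.2 i) q.2)
  left_inv w := by
    have h2 : (∑ m, w.2 m) - ∑ i, Fin.tail w.2 i = w.2 0 := by
      rw [Fin.sum_univ_succ]
      simp only [Fin.tail]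
      abel
    have h1 : (Fin.cons ((∑ m, w.2 m) - ∑ i, Fin.tail w.2 i) (Fin.tail w.2) :
        Fin (d+1) → G) = w.2 := by
      rw [h2, Fin.cons_self_tail]
    simp only [h1]
    simp
  right_inv q := by
    have h1 : ∑ m, (Fin.cons (q.1.2 - ∑ i, q.2 i) q.2 : Fin (d+1) → G) m = q.1.2 := by
      rw [Fin.sum_univ_succ]
      simp only [Fin.cons_zero, Fin.cons_succ]
      abel
    have h2 : Fin.tail (Fin.cons (q.1.2 - ∑ i, q.2 i) q.2 : Fin (d+1) → G) = q.2 :=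
      Fin.tail_cons _ _
    simp only [h1, h2]
    simp

/-- change of variables for the box average -/
def psiEquiv (c : Fin (d+1) → ℤ) (σ : Fin (d+1) → (G ≃ G))
    (hσ : ∀ m (g : G), σ m g = c m • g) :
    (G × ((Fin (d+1) → G) × (Fin (d+1) → G))) ≃ ((G × (Fin (d+1) → G)) × (Fin (d+1) → G)) where
  toFun w := ((w.1 + ∑ m, c m • w.2.1 m, fun m => c m • (w.2.2 m - w.2.1 m)), w.2.1)
  invFun q := (q.1.1 - ∑ m, c m • q.2 m, (q.2, fun m => q.2 m + (σ m).symm (q.1.2 m)))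
  left_inv w := by
    have h1 : ∀ m, w.2.1 m + (σ m).symm (c m • (w.2.2 m - w.2.1 m)) = w.2.2 m := by
      intro m
      rw [← hσ m (w.2.2 m - w.2.1 m), Equiv.symm_apply_apply]
      abel
    simp only [add_sub_cancel_right]
    refine Prod.ext rfl (Prod.ext rfl ?_)
    funext m
    exact h1 m
  right_inv q := by
    have h1 : ∀ m, c m • ((q.2 m + (σ m).symm (q.1.2 m)) - q.2 m) = q.1.2 m := by
      intro m
      have h2 : (q.2 m + (σ m).symm (q.1.2 m)) - q.2 m = (σ m).symm (q.1.2 m) := by abel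
      rw [h2, ← hσ m, Equiv.apply_symm_apply]
    simp only [sub_add_cancel]
    refine Prod.ext (Prod.ext rfl ?_) rfl
    funext m
    exact h1 m

end Main


end VNaux

open Finset

/-- The Gowers uniformity norm `‖f‖_{U^d(G)}` of a function `f : G → ℂ` on a finite
additive group `G`. -/
noncomputable def gowersNorm {G : Type*} [AddCommGroup G] [Fintype G] (d : ℕ) (f : G → ℂ) : ℝ :=
  norm
      (((Fintype.card G : ℂ) ^ (d + 1))⁻¹ *
        ∑ x : G, ∑ h : Fin d → G, ∏ ω : Fin d → Bool,
          (((starRingEnd ℂ) : ℂ → ℂ)^[(univ.filter fun i => ω i = true).card]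
            (f (x + ∑ i ∈ univ.filter (fun i => ω i = true), h i)))) ^
    (((2 : ℝ) ^ d)⁻¹)

open VNaux Function
open scoped BigOperators

set_option maxHeartbeats 3200000 in
/-- **Generalized von Neumann theorem**: if `k ≥ 2`, `G` is a finite abelian group with
`gcd(|G|, (k-1)!) = 1` and `f₀, …, f_{k-1} : G → 𝒟`, then
`|Λ_k(f₀,…,f_{k-1})| ≤ min_j ‖f_j‖_{U^{k-1}(G)}`. -/
theorem generalized_von_neumann {G : Type*} [AddCommGroup G] [Fintype G]
    (k : ℕ) (hk : 2 ≤ k)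
    (hN : Nat.gcd (Fintype.card G) (Nat.factorial (k - 1)) = 1)
    (f : Fin k → G → ℂ) (hf : ∀ j x, norm (f j x) ≤ 1) (j : Fin k) :
    norm (((Fintype.card G : ℂ) ^ 2)⁻¹ *
        ∑ x : G, ∑ r : G, ∏ i : Fin k, f i (x + (i : ℕ) • r)) ≤
      gowersNorm (k - 1) (f j) := by
  obtain ⟨d, rfl⟩ : ∃ d, k = d + 2 := ⟨k - 2, by omega⟩
  show _ ≤ gowersNorm (d+1) (f j)
  have hGne : Nonempty G := ⟨0⟩
  set N := Fintype.card G with hNdef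
  have hN' : Nat.Coprime N (Nat.factorial (d+1)) := hN
  set a : Fin (d+1) → Fin (d+2) := j.succAbove with ha
  have hcopr : ∀ m : Fin (d+1), Nat.Coprime (((j : ℕ) : ℤ) - ((a m : ℕ) : ℤ)).natAbs N := by
    intro m
    have h1 : (a m : ℕ) ≠ (j : ℕ) := fun h => Fin.succAbove_ne j m (Fin.val_injective h)
    have h2 : (j : ℕ) < d + 2 := j.isLt
    have h3 : (a m : ℕ) < d + 2 := (a m).isLt
    have h4 : (((j : ℕ) : ℤ) - ((a m : ℕ) : ℤ)).natAbs ∣ Nat.factorial (d+1) := by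
      apply Nat.dvd_factorial <;> omega
    exact Nat.Coprime.coprime_dvd_left h4 hN'.symm
  set c : Fin (d+1) → ℤ := fun m => ((j : ℕ) : ℤ) - ((a m : ℕ) : ℤ) with hc
  have hbij : ∀ m, Function.Bijective fun g : G => c m • g :=
    fun m => VNaux.zsmul_bijective (c m) (hcopr m)
  set σ : Fin (d+1) → (G ≃ G) := fun m => Equiv.ofBijective _ (hbij m) with hσdef
  have hσ : ∀ m (g : G), σ m g = c m • g := fun m g => rfl
  set Hf : G → (Fin (d+1) → G) → ℂ := fun u y => f j (u + ∑ m, c m • y m) with hHf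
  set Ff : Fin (d+1) → G → (Fin (d+1) → G) → ℂ := fun m u y =>
    f (a m) (u + ∑ m', (((a m : ℕ) : ℤ) - ((a m' : ℕ) : ℤ)) • y m') with hFf
  have hbd : ∀ m (u : G) (y : Fin (d+1) → G), norm (Ff m u y) ≤ 1 :=
    fun m u y => hf _ _
  have hind : ∀ m (u : G) (y : Fin (d+1) → G) (t : G),
      Ff m u (Function.update y m t) = Ff m u y := by
    intro m u y t
    have hs : ∑ m', (((a m : ℕ) : ℤ) - ((a m' : ℕ) : ℤ)) • (Function.update y m t) m'
        = ∑ m', (((a m : ℕ) : ℤ) - ((a m' : ℕ) : ℤ)) • y m' := by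
      refine Finset.sum_congr rfl fun m' _ => ?_
      by_cases h : m' = m
      · subst h; simp
      · rw [Function.update_of_ne h]
    simp only [hFf, hs]
  -- rewriting the progression average
  have harg : ∀ (i : Fin (d+2)) (w : G × (Fin (d+1) → G)),
      (w.1 - ∑ m, ((a m : ℕ) : ℤ) • w.2 m) + (i : ℕ) • (∑ m, w.2 m)
        = w.1 + ∑ m, (((i : ℕ) : ℤ) - ((a m : ℕ) : ℤ)) • w.2 m := by
    intro i w
    rw [← natCast_zsmul, Finset.smul_sum]
    rw [Finset.sum_congr rfl fun m _ => sub_smul ((i : ℕ) : ℤ) ((a m : ℕ) : ℤ) (w.2 m)]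
    rw [Finset.sum_sub_distrib]
    abel
  have eq1 : ((N : ℂ) ^ 2)⁻¹ * (∑ x : G, ∑ r : G, ∏ i : Fin (d+2), f i (x + (i : ℕ) • r))
      = 𝔼 p : G × G, ∏ i : Fin (d+2), f i (p.1 + (i : ℕ) • p.2) := by
    rw [Fintype.expect_eq_sum_div_card, Fintype.sum_prod_type, Fintype.card_prod]
    rw [div_eq_mul_inv, mul_comm]
    congr 1
    push_cast
    ring
  have e21 : (𝔼 q : (G × G) × (Fin d → G), ∏ i : Fin (d+2), f i (q.1.1 + (i : ℕ) • q.1.2))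
      = 𝔼 p : G × G, ∏ i : Fin (d+2), f i (p.1 + (i : ℕ) • p.2) := by
    calc (𝔼 q : (G × G) × (Fin d → G), ∏ i : Fin (d+2), f i (q.1.1 + (i : ℕ) • q.1.2))
        = 𝔼 p : G × G, 𝔼 _b : Fin d → G,
            ∏ i : Fin (d+2), f i (p.1 + (i : ℕ) • p.2) := by
          rw [expect_split]
      _ = 𝔼 p : G × G, ∏ i : Fin (d+2), f i (p.1 + (i : ℕ) • p.2) :=
          Finset.expect_congr rfl fun p _ => Fintype.expect_const _
  have e22 : (𝔼 w : G × (Fin (d+1) → G),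
        ∏ i : Fin (d+2), f i (w.1 + ∑ m, (((i : ℕ) : ℤ) - ((a m : ℕ) : ℤ)) • w.2 m))
      = 𝔼 q : (G × G) × (Fin d → G), ∏ i : Fin (d+2), f i (q.1.1 + (i : ℕ) • q.1.2) := by
    refine Fintype.expect_equiv (phiEquiv a) _ _ fun w => ?_
    refine Finset.prod_congr rfl fun i _ => ?_
    show f i (w.1 + ∑ m, (((i : ℕ) : ℤ) - ((a m : ℕ) : ℤ)) • w.2 m)
        = f i ((w.1 - ∑ m, ((a m : ℕ) : ℤ) • w.2 m) + (i : ℕ) • (∑ m, w.2 m))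
    rw [harg i w]
  have e23 : (𝔼 w : G × (Fin (d+1) → G),
        ∏ i : Fin (d+2), f i (w.1 + ∑ m, (((i : ℕ) : ℤ) - ((a m : ℕ) : ℤ)) • w.2 m))
      = 𝔼 u : G, 𝔼 y : Fin (d+1) → G, Hf u y * ∏ m, Ff m u y := by
    rw [expect_split]
    refine Finset.expect_congr rfl fun u _ => Finset.expect_congr rfl fun y _ => ?_
    rw [Fin.prod_univ_succAbove
      (fun i => f i (u + ∑ m, (((i : ℕ) : ℤ) - ((a m : ℕ) : ℤ)) • y m)) j]
  -- rewriting the box average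
  have hmix : ∀ (ωf : Fin (d+1) → Bool) (w : G × ((Fin (d+1) → G) × (Fin (d+1) → G))),
      w.1 + ∑ m, c m • (if ωf m then w.2.2 m else w.2.1 m)
        = (w.1 + ∑ m, c m • w.2.1 m)
          + ∑ m ∈ univ.filter (fun m => ωf m = true), c m • (w.2.2 m - w.2.1 m) := by
    intro ωf w
    rw [Finset.sum_filter]
    have h1 : ∀ m : Fin (d+1), c m • (if ωf m then w.2.2 m else w.2.1 m)
        = c m • w.2.1 m + (if ωf m = true then c m • (w.2.2 m - w.2.1 m) else 0) := by
      intro m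
      by_cases h : ωf m = true
      · simp only [h, if_true]
        rw [smul_sub]
        abel
      · simp [h]
    rw [Finset.sum_congr rfl fun m _ => h1 m, Finset.sum_add_distrib, add_assoc]
  have eb1 : (𝔼 u : G, 𝔼 y : Fin (d+1) → G, 𝔼 y' : Fin (d+1) → G,
        ∏ ω : Fin (d+1) → Bool,
          (starRingEnd ℂ)^[(univ.filter fun m => ω m = true).card]
            (Hf u fun m => if ω m then y' m else y m))
      = 𝔼 w : G × ((Fin (d+1) → G) × (Fin (d+1) → G)),
          ∏ ω : Fin (d+1) → Bool,
            (starRingEnd ℂ)^[(univ.filter fun m => ω m = true).card]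
              (Hf w.1 fun m => if ω m then w.2.2 m else w.2.1 m) := by
    calc (𝔼 u : G, 𝔼 y : Fin (d+1) → G, 𝔼 y' : Fin (d+1) → G,
          ∏ ω : Fin (d+1) → Bool,
            (starRingEnd ℂ)^[(univ.filter fun m => ω m = true).card]
              (Hf u fun m => if ω m then y' m else y m))
        = 𝔼 u : G, 𝔼 v : (Fin (d+1) → G) × (Fin (d+1) → G),
            ∏ ω : Fin (d+1) → Bool,
              (starRingEnd ℂ)^[(univ.filter fun m => ω m = true).card]
                (Hf u fun m => if ω m then v.2 m else v.1 m) :=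
          Finset.expect_congr rfl fun u _ =>
            (expect_split (g := fun v : (Fin (d+1) → G) × (Fin (d+1) → G) =>
              ∏ ω : Fin (d+1) → Bool,
                (starRingEnd ℂ)^[(univ.filter fun m => ω m = true).card]
                  (Hf u fun m => if ω m then v.2 m else v.1 m))).symm
      _ = _ := (expect_split (g := fun w : G × ((Fin (d+1) → G) × (Fin (d+1) → G)) =>
              ∏ ω : Fin (d+1) → Bool,
                (starRingEnd ℂ)^[(univ.filter fun m => ω m = true).card]
                  (Hf w.1 fun m => if ω m then w.2.2 m else w.2.1 m))).symm
  have eb2 : (𝔼 w : G × ((Fin (d+1) → G) × (Fin (d+1) → G)),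
        ∏ ω : Fin (d+1) → Bool,
          (starRingEnd ℂ)^[(univ.filter fun m => ω m = true).card]
            (Hf w.1 fun m => if ω m then w.2.2 m else w.2.1 m))
      = 𝔼 q : (G × (Fin (d+1) → G)) × (Fin (d+1) → G),
          ∏ ω : Fin (d+1) → Bool,
            (starRingEnd ℂ)^[(univ.filter fun m => ω m = true).card]
              (f j (q.1.1 + ∑ i ∈ univ.filter (fun i => ω i = true), q.1.2 i)) := by
    refine Fintype.expect_equiv (psiEquiv c σ hσ) _ _ fun w => ?_
    refine Finset.prod_congr rfl fun ω _ => ?_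
    congr 1
    show f j (w.1 + ∑ m, c m • (if ω m then w.2.2 m else w.2.1 m))
        = f j ((w.1 + ∑ m, c m • w.2.1 m)
            + ∑ i ∈ univ.filter (fun i => ω i = true), c i • (w.2.2 i - w.2.1 i))
    rw [hmix ω w]
  have eb3 : (𝔼 q : (G × (Fin (d+1) → G)) × (Fin (d+1) → G),
        ∏ ω : Fin (d+1) → Bool,
          (starRingEnd ℂ)^[(univ.filter fun m => ω m = true).card]
            (f j (q.1.1 + ∑ i ∈ univ.filter (fun i => ω i = true), q.1.2 i)))
      = 𝔼 x : G, 𝔼 h : Fin (d+1) → G,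
          ∏ ω : Fin (d+1) → Bool,
            (starRingEnd ℂ)^[(univ.filter fun m => ω m = true).card]
              (f j (x + ∑ i ∈ univ.filter (fun i => ω i = true), h i)) := by
    calc (𝔼 q : (G × (Fin (d+1) → G)) × (Fin (d+1) → G),
          ∏ ω : Fin (d+1) → Bool,
            (starRingEnd ℂ)^[(univ.filter fun m => ω m = true).card]
              (f j (q.1.1 + ∑ i ∈ univ.filter (fun i => ω i = true), q.1.2 i)))
        = 𝔼 ph : G × (Fin (d+1) → G), 𝔼 _b : Fin (d+1) → G,
            ∏ ω : Fin (d+1) → Bool,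
              (starRingEnd ℂ)^[(univ.filter fun m => ω m = true).card]
                (f j (ph.1 + ∑ i ∈ univ.filter (fun i => ω i = true), ph.2 i)) := by
          rw [expect_split]
      _ = 𝔼 ph : G × (Fin (d+1) → G),
            ∏ ω : Fin (d+1) → Bool,
              (starRingEnd ℂ)^[(univ.filter fun m => ω m = true).card]
                (f j (ph.1 + ∑ i ∈ univ.filter (fun i => ω i = true), ph.2 i)) :=
          Finset.expect_congr rfl fun ph _ => Fintype.expect_const _
      _ = _ := by
          rw [expect_split]
  -- the gowers norm
  have eqgow : gowersNorm (d+1) (f j)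
      = norm (𝔼 x : G, 𝔼 h : Fin (d+1) → G,
          ∏ ω : Fin (d+1) → Bool,
            (starRingEnd ℂ)^[(univ.filter fun m => ω m = true).card]
              (f j (x + ∑ i ∈ univ.filter (fun i => ω i = true), h i))) ^ ((2:ℝ)^(d+1))⁻¹ := by
    have hin : ((Fintype.card G : ℂ) ^ (d + 1 + 1))⁻¹ *
          (∑ x : G, ∑ h : Fin (d+1) → G, ∏ ω : Fin (d+1) → Bool,
            (((starRingEnd ℂ) : ℂ → ℂ)^[(univ.filter fun i => ω i = true).card]
              (f j (x + ∑ i ∈ univ.filter (fun i => ω i = true), h i))))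
        = 𝔼 x : G, 𝔼 h : Fin (d+1) → G,
            ∏ ω : Fin (d+1) → Bool,
              (starRingEnd ℂ)^[(univ.filter fun m => ω m = true).card]
                (f j (x + ∑ i ∈ univ.filter (fun i => ω i = true), h i)) := by
      rw [Fintype.expect_eq_sum_div_card]
      rw [Finset.sum_congr rfl fun x _ => Fintype.expect_eq_sum_div_card
        (fun h : Fin (d+1) → G => ∏ ω : Fin (d+1) → Bool,
          (starRingEnd ℂ)^[(univ.filter fun m => ω m = true).card]
            (f j (x + ∑ i ∈ univ.filter (fun i => ω i = true), h i)))]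
      rw [← Finset.sum_div, Fintype.card_fun, Fintype.card_fin, div_div]
      rw [div_eq_mul_inv, mul_comm]
      congr 1
      push_cast
      ring
    rw [gowersNorm, hin]
  -- put everything together
  have hlam := VNaux.lemB (d+1) G Hf Ff hbd hind
  rw [eq1, ← e21, ← e22, e23, eqgow]
  have h6 : norm (𝔼 u : G, 𝔼 y : Fin (d+1) → G, Hf u y * ∏ m, Ff m u y) ^ (2^(d+1) : ℕ)
      ≤ norm (𝔼 x : G, 𝔼 h : Fin (d+1) → G,
          ∏ ω : Fin (d+1) → Bool,
            (starRingEnd ℂ)^[(univ.filter fun m => ω m = true).card]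
              (f j (x + ∑ i ∈ univ.filter (fun i => ω i = true), h i))) := by
    refine hlam.trans ?_
    rw [eb1, eb2, eb3]
  have habs := norm_nonneg (𝔼 u : G, 𝔼 y : Fin (d+1) → G, Hf u y * ∏ m, Ff m u y)
  have hne : (2^(d+1) : ℕ) ≠ 0 := by positivity
  have hexp : (((2^(d+1) : ℕ) : ℝ))⁻¹ = ((2:ℝ)^(d+1))⁻¹ := by
    congr 1
    push_cast
    ring
  calc norm (𝔼 u : G, 𝔼 y : Fin (d+1) → G, Hf u y * ∏ m, Ff m u y)
      = (norm (𝔼 u : G, 𝔼 y : Fin (d+1) → G, Hf u y * ∏ m, Ff m u y)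
          ^ (2^(d+1) : ℕ)) ^ (((2^(d+1) : ℕ) : ℝ))⁻¹ :=
        (Real.pow_rpow_inv_natCast habs hne).symm
    _ ≤ (norm (𝔼 x : G, 𝔼 h : Fin (d+1) → G,
          ∏ ω : Fin (d+1) → Bool,
            (starRingEnd ℂ)^[(univ.filter fun m => ω m = true).card]
              (f j (x + ∑ i ∈ univ.filter (fun i => ω i = true), h i))))
            ^ (((2^(d+1) : ℕ) : ℝ))⁻¹ :=
        Real.rpow_le_rpow (by positivity) h6 (by positivity)
    _ = _ := by rw [hexp]
end

section
/- Inverse theorem for the U²(G) norm: Let G be a finite additive (abelian) group and let f : G → 𝒟 be a bounded function. Then sup_{ξ∈Ĝ} |f̂(ξ)| ≤ ‖f‖_{U²(G)} ≤ (sup_{ξ∈Ĝ} |f̂(ξ)|)^{1/2}, where f̂(ξ) := 𝔼_{x∈G} f(x) e(−ξ·x). -/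
open Finset

/-- The exponential map `e : ℝ/ℤ → ℂ`, `e(θ) = e^{2πiθ}`. -/
noncomputable def ee (θ : AddCircle (1 : ℝ)) : ℂ := (AddCircle.toCircle θ : ℂ)

/-- The Fourier coefficient `f̂(ξ) = 𝔼_{x ∈ G} f(x) e(-ξ·x)`, where the frequency `ξ` is an
element of the dual group, i.e. a homomorphism `G → ℝ/ℤ`. -/
noncomputable def fourierCoef {G : Type*} [AddCommGroup G] [Fintype G]
    (f : G → ℂ) (ξ : G →+ AddCircle (1 : ℝ)) : ℂ :=
  (Fintype.card G : ℂ)⁻¹ * ∑ x : G, f x * ee (-(ξ x))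

set_option linter.unusedSectionVars false

section aux
variable {G : Type*} [AddCommGroup G] [Fintype G]
open Complex

/-- The additive character attached to a homomorphism `G →+ ℝ/ℤ`. -/
noncomputable def homToChar (ξ : G →+ AddCircle (1:ℝ)) : AddChar G ℂ where
  toFun x := ee (ξ x)
  map_zero_eq_one' := by simp [ee]
  map_add_eq_mul' x y := by simp [map_add, ee, AddCircle.toCircle_add]

@[simp] lemma homToChar_apply (ξ : G →+ AddCircle (1:ℝ)) (x : G) :
    homToChar ξ x = ee (ξ x) := rfl

lemma homToChar_surjective : Function.Surjective (homToChar (G := G)) := by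
  intro ψ
  have h1 : ∀ x : G, ψ x ∈ Metric.sphere (0:ℂ) 1 := by
    intro x
    rw [mem_sphere_zero_iff_norm]
    exact ψ.norm_apply x
  set c : G → Circle := fun x => ⟨ψ x, h1 x⟩ with hc
  have hcc : ∀ x, (c x : ℂ) = ψ x := fun x => rfl
  set e : AddCircle (1:ℝ) ≃ₜ Circle := AddCircle.homeomorphCircle one_ne_zero with he
  have het : ∀ θ, e θ = AddCircle.toCircle θ := AddCircle.homeomorphCircle_apply one_ne_zero
  have hback : ∀ z : Circle, AddCircle.toCircle (e.symm z) = z := by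
    intro z; rw [← het, Homeomorph.apply_symm_apply]
  have hinj := AddCircle.injective_toCircle (one_ne_zero : (1:ℝ) ≠ 0)
  refine ⟨{ toFun := fun x => e.symm (c x), map_zero' := ?_, map_add' := ?_ }, ?_⟩
  · apply hinj
    rw [hback, AddCircle.toCircle_zero]
    ext; simp [hcc]
  · intro x y
    apply hinj
    rw [hback, AddCircle.toCircle_add, hback, hback]
    ext
    simp only [hcc, Circle.coe_mul]
    exact ψ.map_add_eq_mul x y
  · ext x
    simp only [homToChar_apply, ee]
    rw [AddMonoidHom.coe_mk, ZeroHom.coe_mk, hback, hcc]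

variable {G : Type*} [AddCommGroup G] [Fintype G]
open Complex

noncomputable def gc (f : G → ℂ) (ψ : AddChar G ℂ) : ℂ :=
  (Fintype.card G : ℂ)⁻¹ * ∑ x : G, f x * ψ (-x)

lemma conj_gc (f : G → ℂ) (ψ : AddChar G ℂ) :
    (starRingEnd ℂ) (gc f ψ)
      = (Fintype.card G : ℂ)⁻¹ * ∑ x : G, (starRingEnd ℂ) (f x) * ψ x := by
  unfold gc
  rw [map_mul, map_inv₀, Complex.conj_natCast, map_sum]
  refine congrArg _ (Finset.sum_congr rfl fun x _ => ?_)
  rw [map_mul, ← AddChar.map_neg_eq_conj, neg_neg]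

lemma collapse1 [DecidableEq G] (t : G → ℂ) (y : G) :
    ∑ ψ : AddChar G ℂ, ∑ x : G, t x * ψ (y - x) = (Fintype.card G : ℂ) * t y := by
  rw [Finset.sum_comm]
  have h1 : ∀ x : G, ∑ ψ : AddChar G ℂ, t x * ψ (y - x)
      = t x * (if y - x = 0 then (Fintype.card G : ℂ) else 0) := by
    intro x; rw [← Finset.mul_sum, AddChar.sum_apply_eq_ite]
  simp_rw [h1]
  rw [Finset.sum_eq_single y]
  · rw [if_pos (by abel), mul_comm]
  · intro x _ hx
    rw [if_neg (fun h => hx (sub_eq_zero.mp h).symm), mul_zero]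
  · intro h; exact absurd (Finset.mem_univ _) h

lemma collapse2 [DecidableEq G] (t : G → ℂ) (y : G) :
    ∑ ψ : AddChar G ℂ, ∑ x : G, t x * ψ (x - y) = (Fintype.card G : ℂ) * t y := by
  rw [Finset.sum_comm]
  have h1 : ∀ x : G, ∑ ψ : AddChar G ℂ, t x * ψ (x - y)
      = t x * (if x - y = 0 then (Fintype.card G : ℂ) else 0) := by
    intro x; rw [← Finset.mul_sum, AddChar.sum_apply_eq_ite]
  simp_rw [h1]
  rw [Finset.sum_eq_single y]
  · rw [if_pos (by abel), mul_comm]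
  · intro x _ hx
    rw [if_neg (fun h => hx (by rwa [sub_eq_zero] at h)), mul_zero]
  · intro h; exact absurd (Finset.mem_univ _) h

lemma sum_rot (F : G → G → G → ℂ) :
    ∑ x : G, ∑ y : G, ∑ z : G, F x y z = ∑ y : G, ∑ z : G, ∑ x : G, F x y z := by
  rw [Finset.sum_comm]
  exact Finset.sum_congr rfl fun y _ => Finset.sum_comm

/-- Parseval-type identity. -/
lemma sum_pair (f : G → ℂ) :
    ∑ ψ : AddChar G ℂ, gc f ψ * (starRingEnd ℂ) (gc f ψ)
      = (Fintype.card G : ℂ)⁻¹ * ∑ a : G, f a * (starRingEnd ℂ) (f a) := by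
  classical
  have key : ∀ ψ : AddChar G ℂ, gc f ψ * (starRingEnd ℂ) (gc f ψ)
      = ((Fintype.card G : ℂ)^2)⁻¹ *
        ∑ a : G, ∑ b : G, (f a * (starRingEnd ℂ) (f b)) * ψ (b - a) := by
    intro ψ
    rw [conj_gc]; unfold gc
    rw [mul_mul_mul_comm, ← mul_inv, ← sq]
    congr 1
    rw [Finset.sum_mul_sum]
    refine Finset.sum_congr rfl fun a _ => Finset.sum_congr rfl fun b _ => ?_
    have : ψ (b - a) = ψ (-a) * ψ b := by
      rw [← AddChar.map_add_eq_mul]; congr 1; abel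
    rw [this]; ring
  simp_rw [key]
  rw [← Finset.mul_sum]
  have : ∑ ψ : AddChar G ℂ, ∑ a : G, ∑ b : G, (f a * (starRingEnd ℂ) (f b)) * ψ (b - a)
      = ∑ a : G, ∑ ψ : AddChar G ℂ, ∑ b : G, (f a * (starRingEnd ℂ) (f b)) * ψ (b - a) :=
    Finset.sum_comm
  rw [this]
  have h2 : ∀ a : G, ∑ ψ : AddChar G ℂ, ∑ b : G, (f a * (starRingEnd ℂ) (f b)) * ψ (b - a)
      = (Fintype.card G : ℂ) * (f a * (starRingEnd ℂ) (f a)) :=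
    fun a => collapse2 _ a
  simp_rw [h2]
  rw [← Finset.mul_sum]
  have hN : ((Fintype.card G : ℂ)^2)⁻¹ * ((Fintype.card G : ℂ) * ∑ a : G, f a * (starRingEnd ℂ) (f a))
      = ((Fintype.card G : ℂ)^2)⁻¹ * (Fintype.card G : ℂ) * ∑ a : G, f a * (starRingEnd ℂ) (f a) := by ring
  rw [hN]
  congr 1
  have hcard : (Fintype.card G : ℂ) ≠ 0 := by
    exact_mod_cast Nat.cast_ne_zero.2 Fintype.card_ne_zero
  field_simp


/-- The `U²` identity: fourth moment of Fourier coefficients. -/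
lemma sum_quad (f : G → ℂ) :
    ∑ ψ : AddChar G ℂ, gc f ψ * gc f ψ * ((starRingEnd ℂ) (gc f ψ) * (starRingEnd ℂ) (gc f ψ))
      = ((Fintype.card G : ℂ)^3)⁻¹ *
        ∑ a : G, ∑ b : G, ∑ c : G,
          f a * f c * ((starRingEnd ℂ) (f b) * (starRingEnd ℂ) (f (a + c - b))) := by
  classical
  set N : ℂ := (Fintype.card G : ℂ) with hNdef
  have hcard : N ≠ 0 := Nat.cast_ne_zero.2 Fintype.card_ne_zero
  have key : ∀ ψ : AddChar G ℂ, gc f ψ * gc f ψ * ((starRingEnd ℂ) (gc f ψ) * (starRingEnd ℂ) (gc f ψ))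
      = (N^4)⁻¹ * ∑ d : G, ∑ b : G, ∑ c : G, ∑ a : G,
          (f a * f c * ((starRingEnd ℂ) (f b) * (starRingEnd ℂ) (f d))) * ψ (b + d - c - a) := by
    intro ψ
    rw [conj_gc]; unfold gc
    have hre : (N⁻¹ * ∑ x : G, f x * ψ (-x)) * (N⁻¹ * ∑ x : G, f x * ψ (-x)) *
        ((N⁻¹ * ∑ x : G, (starRingEnd ℂ) (f x) * ψ x) * (N⁻¹ * ∑ x : G, (starRingEnd ℂ) (f x) * ψ x))
        = (N⁻¹)^4 * ((∑ x : G, f x * ψ (-x)) * (∑ x : G, f x * ψ (-x)) *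
          ((∑ x : G, (starRingEnd ℂ) (f x) * ψ x) * (∑ x : G, (starRingEnd ℂ) (f x) * ψ x))) := by
      ring
    rw [hre, inv_pow]
    congr 1
    simp only [Finset.sum_mul, Finset.mul_sum]
    refine Finset.sum_congr rfl fun d _ => Finset.sum_congr rfl fun b _ =>
      Finset.sum_congr rfl fun c _ => Finset.sum_congr rfl fun a _ => ?_
    have : ψ (b + d - c - a) = ψ (-a) * ψ (-c) * (ψ b * ψ d) := by
      rw [← AddChar.map_add_eq_mul, ← AddChar.map_add_eq_mul, ← AddChar.map_add_eq_mul]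
      congr 1; abel
    rw [this]; ring
  simp_rw [key]
  rw [← Finset.mul_sum]
  have hswap : ∑ ψ : AddChar G ℂ, ∑ d : G, ∑ b : G, ∑ c : G, ∑ a : G,
        (f a * f c * ((starRingEnd ℂ) (f b) * (starRingEnd ℂ) (f d))) * ψ (b + d - c - a)
      = ∑ d : G, ∑ b : G, ∑ c : G, ∑ ψ : AddChar G ℂ, ∑ a : G,
        (f a * f c * ((starRingEnd ℂ) (f b) * (starRingEnd ℂ) (f d))) * ψ (b + d - c - a) := by
    rw [Finset.sum_comm]
    refine Finset.sum_congr rfl fun d _ => ?_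
    rw [Finset.sum_comm]
    refine Finset.sum_congr rfl fun b _ => ?_
    rw [Finset.sum_comm]
  rw [hswap]
  have hcol : ∀ d b c : G, ∑ ψ : AddChar G ℂ, ∑ a : G,
        (f a * f c * ((starRingEnd ℂ) (f b) * (starRingEnd ℂ) (f d))) * ψ (b + d - c - a)
      = N * (f (b + d - c) * f c * ((starRingEnd ℂ) (f b) * (starRingEnd ℂ) (f d))) := by
    intro d b c
    exact collapse1 (fun a => f a * f c * ((starRingEnd ℂ) (f b) * (starRingEnd ℂ) (f d))) (b + d - c)
  simp_rw [hcol]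
  simp_rw [← Finset.mul_sum]
  have hN4 : (N^4)⁻¹ * N = (N^3)⁻¹ := by field_simp
  rw [← mul_assoc, hN4]
  congr 1
  -- reindex the triple sum
  conv_lhs => rw [sum_rot (fun d b c => f (b + d - c) * f c * ((starRingEnd ℂ) (f b) * (starRingEnd ℂ) (f d)))]
  conv_rhs => rw [sum_rot (fun a b c => f a * f c * ((starRingEnd ℂ) (f b) * (starRingEnd ℂ) (f (a + c - b))))]
  refine Finset.sum_congr rfl fun b _ => Finset.sum_congr rfl fun c _ => ?_
  refine Fintype.sum_equiv ⟨fun d => b + d - c, fun a => a + c - b, fun d => by show b + d - c + c - b = d; abel, fun a => by show b + (a + c - b) - c = a; abel⟩ _ _ fun d => ?_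
  simp only [Equiv.coe_fn_mk]
  have harg : b + d - c + c - b = d := by abel
  rw [harg]

lemma gowers_inner (f : G → ℂ) :
    (∑ x : G, ∑ h : Fin 2 → G, ∏ ω : Fin 2 → Bool,
        (((starRingEnd ℂ) : ℂ → ℂ)^[(univ.filter fun i => ω i = true).card]
          (f (x + ∑ i ∈ univ.filter (fun i => ω i = true), h i))))
      = ∑ a : G, ∑ b : G, ∑ c : G,
          f a * f c * ((starRingEnd ℂ) (f b) * (starRingEnd ℂ) (f (a + c - b))) := by
  have e1 : (univ.filter fun i : Fin 2 => (![false, false] : Fin 2 → Bool) i = true) = ∅ := by decide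
  have e2 : (univ.filter fun i : Fin 2 => (![true, false] : Fin 2 → Bool) i = true) = {0} := by decide
  have e3 : (univ.filter fun i : Fin 2 => (![false, true] : Fin 2 → Bool) i = true) = {1} := by decide
  have e4 : (univ.filter fun i : Fin 2 => (![true, true] : Fin 2 → Bool) i = true) = univ := by decide
  have hP : ∀ (x : G) (h : Fin 2 → G),
      (∏ ω : Fin 2 → Bool, (((starRingEnd ℂ) : ℂ → ℂ)^[(univ.filter fun i => ω i = true).card]
        (f (x + ∑ i ∈ univ.filter (fun i => ω i = true), h i))))
      = f x * f (x + (h 0 + h 1))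
          * ((starRingEnd ℂ) (f (x + h 0)) * (starRingEnd ℂ) (f (x + h 1))) := by
    intro x h
    rw [← Equiv.prod_comp (finTwoArrowEquiv Bool).symm, Fintype.prod_prod_type]
    simp only [Fintype.prod_bool, finTwoArrowEquiv_symm_apply]
    rw [e1, e2, e3, e4]
    simp only [Finset.card_empty, Finset.card_singleton, Finset.card_univ, Fintype.card_fin,
      Finset.sum_empty, Finset.sum_singleton, Function.iterate_zero, Function.iterate_one, id_eq,
      add_zero]
    rw [Fin.sum_univ_two]
    have h2 : (((starRingEnd ℂ) : ℂ → ℂ)^[2]) (f (x + (h 0 + h 1))) = f (x + (h 0 + h 1)) := by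
      simp [Function.iterate_succ, Complex.conj_conj]
    rw [h2]
    ring
  calc (∑ x : G, ∑ h : Fin 2 → G, ∏ ω : Fin 2 → Bool,
        (((starRingEnd ℂ) : ℂ → ℂ)^[(univ.filter fun i => ω i = true).card]
          (f (x + ∑ i ∈ univ.filter (fun i => ω i = true), h i))))
      = ∑ x : G, ∑ h : Fin 2 → G, f x * f (x + (h 0 + h 1))
          * ((starRingEnd ℂ) (f (x + h 0)) * (starRingEnd ℂ) (f (x + h 1))) := by
        exact Finset.sum_congr rfl fun x _ => Finset.sum_congr rfl fun h _ => hP x h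
    _ = ∑ x : G, ∑ h1 : G, ∑ h2 : G, f x * f (x + (h1 + h2))
          * ((starRingEnd ℂ) (f (x + h1)) * (starRingEnd ℂ) (f (x + h2))) := by
        refine Finset.sum_congr rfl fun x _ => ?_
        rw [← Equiv.sum_comp (finTwoArrowEquiv G).symm, Fintype.sum_prod_type]
        simp [finTwoArrowEquiv_symm_apply]
    _ = ∑ a : G, ∑ b : G, ∑ c : G,
          f a * f c * ((starRingEnd ℂ) (f b) * (starRingEnd ℂ) (f (a + c - b))) := by
        refine Finset.sum_congr rfl fun x _ => ?_
        refine (Fintype.sum_equiv (Equiv.addLeft x) _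
          (fun b => ∑ h2 : G, f x * f (b + h2)
            * ((starRingEnd ℂ) (f b) * (starRingEnd ℂ) (f (x + h2)))) fun h1 => ?_).trans ?_
        · simp only [Equiv.coe_addLeft]
          refine Finset.sum_congr rfl fun h2 _ => ?_
          rw [add_assoc]
        · refine Finset.sum_congr rfl fun b _ => ?_
          refine Fintype.sum_equiv (Equiv.addLeft b) _
            (fun c => f x * f c
              * ((starRingEnd ℂ) (f b) * (starRingEnd ℂ) (f (x + c - b)))) fun h2 => ?_
          simp only [Equiv.coe_addLeft]
          have harg : x + (b + h2) - b = x + h2 := by abel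
          rw [harg]


lemma fourierCoef_eq_gc (f : G → ℂ) (ξ : G →+ AddCircle (1:ℝ)) :
    fourierCoef f ξ = gc f (homToChar ξ) := by
  unfold fourierCoef gc
  congr 1
  refine Finset.sum_congr rfl fun x _ => ?_
  rw [homToChar_apply, map_neg]

lemma abs_gc_le_one (f : G → ℂ) (hf : ∀ x, norm (f x) ≤ 1) (ψ : AddChar G ℂ) :
    norm (gc f ψ) ≤ 1 := by
  unfold gc
  rw [norm_mul, norm_inv, Complex.norm_natCast]
  calc (Fintype.card G : ℝ)⁻¹ * norm (∑ x : G, f x * ψ (-x))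
      ≤ (Fintype.card G : ℝ)⁻¹ * ∑ x : G, norm (f x * ψ (-x)) := by
        gcongr
        exact norm_sum_le _ _
    _ ≤ (Fintype.card G : ℝ)⁻¹ * ∑ _x : G, (1:ℝ) := by
        gcongr with x _
        rw [norm_mul]
        have h1 : norm (ψ (-x)) = 1 := by
          exact ψ.norm_apply _
        rw [h1, mul_one]
        exact hf x
    _ ≤ 1 := by
        rw [Finset.sum_const, card_univ, nsmul_eq_mul, mul_one]
        rcases Nat.eq_zero_or_pos (Fintype.card G) with h | h
        · simp [h]
        · rw [inv_mul_cancel₀ (by exact_mod_cast h.ne' : (Fintype.card G : ℝ) ≠ 0)]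

end aux

/-- **Inverse theorem for the `U²(G)` norm**: for any bounded `f : G → 𝒟`,
`sup_ξ |f̂(ξ)| ≤ ‖f‖_{U²(G)} ≤ (sup_ξ |f̂(ξ)|)^{1/2}`. -/
theorem inverse_U2 {G : Type*} [AddCommGroup G] [Fintype G]
    (f : G → ℂ) (hf : ∀ x, norm (f x) ≤ 1) :
    (⨆ ξ : G →+ AddCircle (1 : ℝ), norm (fourierCoef f ξ)) ≤ gowersNorm 2 f ∧
      gowersNorm 2 f ≤
        (⨆ ξ : G →+ AddCircle (1 : ℝ), norm (fourierCoef f ξ)) ^ ((1 : ℝ) / 2) := by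
  classical
  haveI : Nonempty (G →+ AddCircle (1 : ℝ)) := ⟨0⟩
  have hNC : (Fintype.card G : ℝ) ≠ 0 := Nat.cast_ne_zero.2 Fintype.card_ne_zero
  set K : ℝ := ∑ ψ : AddChar G ℂ, Complex.normSq (gc f ψ) ^ 2 with hK
  have hK0 : (0:ℝ) ≤ K := Finset.sum_nonneg fun ψ _ => by positivity
  have hS : (K : ℂ) = ∑ ψ : AddChar G ℂ,
      gc f ψ * gc f ψ * ((starRingEnd ℂ) (gc f ψ) * (starRingEnd ℂ) (gc f ψ)) := by
    rw [hK]
    push_cast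
    refine Finset.sum_congr rfl fun ψ _ => ?_
    rw [← Complex.mul_conj]
    ring
  have hGN : gowersNorm 2 f = K ^ ((4:ℝ)⁻¹) := by
    unfold gowersNorm
    rw [gowers_inner f]
    have h3 : ((Fintype.card G : ℂ) ^ (2+1))⁻¹ = ((Fintype.card G : ℂ)^3)⁻¹ := by norm_num
    rw [h3, ← sum_quad f, ← hS]
    rw [Complex.norm_of_nonneg hK0]
    norm_num
  have hpar : ∑ ψ : AddChar G ℂ, Complex.normSq (gc f ψ) ≤ 1 := by
    have h2 : ((∑ ψ : AddChar G ℂ, Complex.normSq (gc f ψ) : ℝ) : ℂ)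
        = (((Fintype.card G : ℝ)⁻¹ * ∑ a : G, Complex.normSq (f a) : ℝ) : ℂ) := by
      push_cast
      rw [show ∑ ψ : AddChar G ℂ, (Complex.normSq (gc f ψ) : ℂ)
          = ∑ ψ : AddChar G ℂ, gc f ψ * (starRingEnd ℂ) (gc f ψ) from
        Finset.sum_congr rfl fun ψ _ => (Complex.mul_conj _).symm]
      rw [sum_pair f]
      exact congrArg _ (Finset.sum_congr rfl fun a _ => Complex.mul_conj _)
    have h3 : ∑ ψ : AddChar G ℂ, Complex.normSq (gc f ψ)
        = (Fintype.card G : ℝ)⁻¹ * ∑ a : G, Complex.normSq (f a) := Complex.ofReal_inj.mp h2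
    rw [h3]
    calc (Fintype.card G : ℝ)⁻¹ * ∑ a : G, Complex.normSq (f a)
        ≤ (Fintype.card G : ℝ)⁻¹ * ∑ _a : G, (1:ℝ) := by
          gcongr with a _
          rw [Complex.normSq_eq_norm_sq]
          exact pow_le_one₀ (norm_nonneg _) (hf a)
      _ ≤ 1 := by
          rw [Finset.sum_const, card_univ, nsmul_eq_mul, mul_one,
            inv_mul_cancel₀ hNC]
  set M : ℝ := ⨆ ξ : G →+ AddCircle (1 : ℝ), norm (fourierCoef f ξ) with hM
  have hbdd : BddAbove (Set.range fun ξ : G →+ AddCircle (1 : ℝ) => norm (fourierCoef f ξ)) := by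
    refine ⟨1, ?_⟩
    rintro _ ⟨ξ, rfl⟩
    show norm (fourierCoef f ξ) ≤ 1
    rw [fourierCoef_eq_gc]
    exact abs_gc_le_one f hf _
  have hle : ∀ ξ : G →+ AddCircle (1 : ℝ), norm (fourierCoef f ξ) ≤ M :=
    fun ξ => le_ciSup hbdd ξ
  have hM0 : (0:ℝ) ≤ M := le_trans (norm_nonneg _) (hle 0)
  constructor
  · -- sup ≤ gowers norm
    rw [hGN]
    refine ciSup_le fun ξ => ?_
    rw [fourierCoef_eq_gc]
    set a : ℝ := norm (gc f (homToChar ξ)) with ha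
    have ha0 : (0:ℝ) ≤ a := norm_nonneg _
    have h4 : a ^ (4:ℕ) ≤ K := by
      have : Complex.normSq (gc f (homToChar ξ)) ^ 2 = a ^ (4:ℕ) := by
        rw [Complex.normSq_eq_norm_sq, ← ha, ← pow_mul]
      rw [← this, hK]
      exact Finset.single_le_sum (f := fun ψ : AddChar G ℂ => Complex.normSq (gc f ψ) ^ 2)
        (fun ψ _ => by positivity) (Finset.mem_univ _)
    have hmono := Real.rpow_le_rpow (by positivity) h4 (by norm_num : (0:ℝ) ≤ (4:ℝ)⁻¹)
    have hid : (a ^ (4:ℕ)) ^ ((4:ℝ)⁻¹) = a := by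
      rw [← Real.rpow_natCast a 4, ← Real.rpow_mul ha0]
      norm_num
    rwa [hid] at hmono
  · -- gowers norm ≤ sup ^ (1/2)
    rw [hGN]
    have hKM : K ≤ M ^ (2:ℕ) := by
      have hstep : ∀ ψ : AddChar G ℂ, Complex.normSq (gc f ψ) ^ 2
          ≤ M ^ (2:ℕ) * Complex.normSq (gc f ψ) := by
        intro ψ
        obtain ⟨ξ, rfl⟩ := homToChar_surjective ψ
        have h1 : Complex.normSq (gc f (homToChar ξ)) ≤ M ^ (2:ℕ) := by
          rw [Complex.normSq_eq_norm_sq, ← fourierCoef_eq_gc]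
          exact pow_le_pow_left₀ (norm_nonneg _) (hle ξ) 2
        calc Complex.normSq (gc f (homToChar ξ)) ^ 2
            = Complex.normSq (gc f (homToChar ξ)) * Complex.normSq (gc f (homToChar ξ)) := sq _
          _ ≤ M ^ (2:ℕ) * Complex.normSq (gc f (homToChar ξ)) :=
              mul_le_mul_of_nonneg_right h1 (Complex.normSq_nonneg _)
      calc K ≤ ∑ ψ : AddChar G ℂ, M ^ (2:ℕ) * Complex.normSq (gc f ψ) :=
            Finset.sum_le_sum fun ψ _ => hstep ψ
        _ = M ^ (2:ℕ) * ∑ ψ : AddChar G ℂ, Complex.normSq (gc f ψ) := by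
            rw [Finset.mul_sum]
        _ ≤ M ^ (2:ℕ) * 1 := by
            exact mul_le_mul_of_nonneg_left hpar (by positivity)
        _ = M ^ (2:ℕ) := mul_one _
    have hmono := Real.rpow_le_rpow hK0 hKM (by norm_num : (0:ℝ) ≤ (4:ℝ)⁻¹)
    have hid : (M ^ (2:ℕ)) ^ ((4:ℝ)⁻¹) = M ^ ((1:ℝ)/2) := by
      rw [← Real.rpow_natCast M 2, ← Real.rpow_mul hM0]
      norm_num
    rwa [hid] at hmono
end

section
/- Large U³ norm gives many additive quadruples: Let G be a finite additive (abelian) group with |G| = N, let η > 0, and let f : G → 𝒟 be a bounded function with ‖f‖_{U³(G)} ≥ η. Then there exist a set H ⊆ G and a function ξ : H → Ĝ, with graph Γ := {(h, ξ_h) : h ∈ H} ⊆ G × Ĝ, such that the number of quadruples (z₁,z₂,z₃,z₄) ∈ Γ⁴ with z₁ + z₂ = z₃ + z₄ is at least 2^{−8} η^{64} N³, and moreover |𝔼_{x∈G} f(x+h) \overline{f(x)} e(−ξ_h·x)| ≥ η⁴/2^{1/2} for every h ∈ H. -/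
open Finset

namespace GU3

lemma ee_zero : ee 0 = 1 := by simp [ee]

lemma ee_add (a b : AddCircle (1:ℝ)) : ee (a+b) = ee a * ee b := by
  simp [ee, AddCircle.toCircle_add]

lemma ee_abs (a : AddCircle (1:ℝ)) : norm (ee a) = 1 := by simp [ee, Circle.norm_coe]

lemma ee_normSq (a : AddCircle (1:ℝ)) : Complex.normSq (ee a) = 1 := by
  have := ee_abs a
  rw [← Complex.sq_norm, this, one_pow]

lemma toCircle_neg' (a : AddCircle (1:ℝ)) :
    AddCircle.toCircle (-a) = (AddCircle.toCircle a)⁻¹ := by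
  rw [eq_inv_iff_mul_eq_one, ← AddCircle.toCircle_add]
  simp

lemma ee_conj (a : AddCircle (1:ℝ)) : (starRingEnd ℂ) (ee a) = ee (-a) := by
  rw [ee, ← Circle.coe_inv_eq_conj, ee, toCircle_neg']

lemma ee_neg (a : AddCircle (1:ℝ)) : ee (-a) = (starRingEnd ℂ) (ee a) := (ee_conj a).symm

lemma ee_sub (a b : AddCircle (1:ℝ)) : ee (a-b) = ee a * (starRingEnd ℂ) (ee b) := by
  rw [sub_eq_add_neg, ee_add, ee_neg]

variable {G : Type*} [AddCommGroup G] [Fintype G]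

noncomputable def dualToChar (ξ : G →+ AddCircle (1:ℝ)) : AddChar G ℂ :=
  AddChar.circleEquivComplex (AddCircle.toCircle_addChar.compAddMonoidHom ξ)

lemma toCircle_symm' (c : Circle) :
    AddCircle.toCircle ((AddCircle.homeomorphCircle (one_ne_zero (α := ℝ))).symm c) = c := by
  rw [← AddCircle.homeomorphCircle_apply, Homeomorph.apply_symm_apply]
  exact one_ne_zero

lemma dualToChar_bij : Function.Bijective (dualToChar (G := G)) := by
  have inj := AddCircle.injective_toCircle (T := 1) one_ne_zero
  refine ⟨fun ξ ξ' h => ?_, fun ψ => ?_⟩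
  · ext x
    have := DFunLike.congr_fun ((AddChar.circleEquivComplex (α := G)).injective h) x
    exact inj this
  · set ψ' := (AddChar.circleEquivComplex (α := G)).symm ψ with hψ'
    refine ⟨{ toFun := fun x => (AddCircle.homeomorphCircle one_ne_zero).symm (ψ' x),
              map_zero' := inj ?_, map_add' := fun a b => inj ?_ }, ?_⟩
    · rw [toCircle_symm']; simp
    · rw [toCircle_symm', AddCircle.toCircle_add, toCircle_symm', toCircle_symm',
        AddChar.map_add_eq_mul]
    · rw [dualToChar]
      rw [show AddCircle.toCircle_addChar.compAddMonoidHom _ = ψ' from ?_]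
      · rw [hψ']
        exact (AddChar.circleEquivComplex (α := G)).apply_symm_apply ψ
      · ext x
        exact congrArg _ (toCircle_symm' _)

noncomputable instance : Fintype (G →+ AddCircle (1 : ℝ)) :=
  Fintype.ofBijective _ (Equiv.ofBijective _ (dualToChar_bij (G := G))).symm.bijective

lemma dualToChar_apply (ξ : G →+ AddCircle (1:ℝ)) (x : G) :
    dualToChar ξ x = ee (ξ x) := rfl

lemma sum_ee [DecidableEq G] (z : G) :
    ∑ ξ : G →+ AddCircle (1:ℝ), ee (ξ z)
      = if z = 0 then (Fintype.card G : ℂ) else 0 := by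
  rw [← AddChar.sum_apply_eq_ite (α := G) z,
    ← Function.Bijective.sum_comp (dualToChar_bij (G := G)) (fun ψ => ψ z)]
  rfl

/- combinatorial expansions -/

lemma prod_fin3bool {M : Type*} [CommMonoid M] (F : (Fin 3 → Bool) → M) :
    ∏ ω : Fin 3 → Bool, F ω =
      F ![false,false,false] * F ![true,false,false] * F ![false,true,false] *
      F ![true,true,false] * F ![false,false,true] * F ![true,false,true] *
      F ![false,true,true] * F ![true,true,true] := by
  have h : (univ : Finset (Fin 3 → Bool)) =
      {![false,false,false], ![true,false,false], ![false,true,false], ![true,true,false],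
       ![false,false,true], ![true,false,true], ![false,true,true], ![true,true,true]} := by
    decide
  rw [h, prod_insert (by decide), prod_insert (by decide), prod_insert (by decide),
    prod_insert (by decide), prod_insert (by decide), prod_insert (by decide),
    prod_insert (by decide), prod_singleton]
  simp [mul_assoc]

lemma sumCons3 {G M : Type*} [Fintype G] [AddCommMonoid M] {n : ℕ} (F : (Fin (n+1) → G) → M) :
    ∑ h : Fin (n+1) → G, F h = ∑ a : G, ∑ v : Fin n → G, F (Fin.cons a v) := by
  rw [← (Fin.consEquiv fun _ : Fin (n+1) => G).sum_comp F, Fintype.sum_prod_type]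
  rfl

lemma sum_fin3 {G M : Type*} [Fintype G] [AddCommMonoid M] (F : (Fin 3 → G) → M) :
    ∑ h : Fin 3 → G, F h = ∑ a : G, ∑ b : G, ∑ c : G, F ![a,b,c] := by
  rw [sumCons3]
  refine Finset.sum_congr rfl fun a _ => ?_
  rw [sumCons3]
  refine Finset.sum_congr rfl fun b _ => ?_
  rw [sumCons3]
  refine Finset.sum_congr rfl fun c _ => ?_
  rw [Fintype.sum_unique]
  exact congrArg F (congrArg _ (congrArg _ (congrArg _ (Subsingleton.elim _ _))))



noncomputable def Tg (g : G → ℂ) : ℝ :=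
  ∑ s : G, Complex.normSq (∑ x : G, g x * (starRingEnd ℂ) (g (x + s)))

lemma Tg_nonneg (g : G → ℂ) : 0 ≤ Tg g :=
  Finset.sum_nonneg fun _ _ => Complex.normSq_nonneg _

lemma U2_expand (g : G → ℂ) :
    ∑ x : G, ∑ a : G, ∑ b : G,
        g x * (starRingEnd ℂ) (g (x + a)) * (starRingEnd ℂ) (g (x + b)) * g (x + a + b)
      = ((Tg g : ℝ) : ℂ) := by
  have : ((Tg g : ℝ) : ℂ)
      = ∑ s : G, (∑ x : G, g x * (starRingEnd ℂ) (g (x + s)))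
          * (starRingEnd ℂ) (∑ y : G, g y * (starRingEnd ℂ) (g (y + s))) := by
    rw [Tg]
    push_cast
    exact Finset.sum_congr rfl fun s _ => (Complex.mul_conj _).symm
  rw [this, Finset.sum_comm]
  refine Finset.sum_congr rfl fun a _ => ?_
  rw [map_sum, Finset.sum_mul_sum]
  refine Finset.sum_congr rfl fun x _ => ?_
  rw [← Equiv.sum_comp (Equiv.addLeft x) (fun y =>
    g x * (starRingEnd ℂ) (g (x + a)) * ((starRingEnd ℂ) (g y * (starRingEnd ℂ) (g (y + a)))))]
  refine Finset.sum_congr rfl fun b _ => ?_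
  simp only [Equiv.coe_addLeft, map_mul, Complex.conj_conj]
  have h1 : x + a + b = x + b + a := add_right_comm x a b
  rw [h1]
  ring




noncomputable def cD (f : G → ℂ) (c : G) : G → ℂ := fun u => f (u + c) * (starRingEnd ℂ) (f u)

lemma conj2 (z : ℂ) : (⇑(starRingEnd ℂ))^[2] z = z := by
  simp [show (2:ℕ)=1+1 from rfl, Function.iterate_add_apply]

lemma conj3 (z : ℂ) : (⇑(starRingEnd ℂ))^[3] z = (starRingEnd ℂ) z := by
  simp [show (3:ℕ)=2+1 from rfl, Function.iterate_add_apply, conj2]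

set_option maxHeartbeats 1000000 in
lemma integrand (f : G → ℂ) (x a b c : G) :
    (∏ ω : Fin 3 → Bool, (starRingEnd ℂ)^[(univ.filter fun i => ω i = true).card]
        (f (x + ∑ i ∈ univ.filter (fun i => ω i = true), (![a,b,c] : Fin 3 → G) i)))
    = (starRingEnd ℂ) (cD f c x * (starRingEnd ℂ) (cD f c (x+a)) *
        (starRingEnd ℂ) (cD f c (x+b)) * cD f c (x+a+b)) := by
  rw [prod_fin3bool (fun ω => (starRingEnd ℂ)^[(univ.filter fun i => ω i = true).card]
        (f (x + ∑ i ∈ univ.filter (fun i => ω i = true), (![a,b,c] : Fin 3 → G) i)))]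
  have e0 : (univ.filter fun i : Fin 3 => (![false,false,false] : Fin 3 → Bool) i = true)
      = (∅ : Finset (Fin 3)) := by decide
  have e1 : (univ.filter fun i : Fin 3 => (![true,false,false] : Fin 3 → Bool) i = true)
      = {0} := by decide
  have e2 : (univ.filter fun i : Fin 3 => (![false,true,false] : Fin 3 → Bool) i = true)
      = {1} := by decide
  have e12 : (univ.filter fun i : Fin 3 => (![true,true,false] : Fin 3 → Bool) i = true)
      = {0,1} := by decide
  have e3 : (univ.filter fun i : Fin 3 => (![false,false,true] : Fin 3 → Bool) i = true)
      = {2} := by decide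
  have e13 : (univ.filter fun i : Fin 3 => (![true,false,true] : Fin 3 → Bool) i = true)
      = {0,2} := by decide
  have e23 : (univ.filter fun i : Fin 3 => (![false,true,true] : Fin 3 → Bool) i = true)
      = {1,2} := by decide
  have e123 : (univ.filter fun i : Fin 3 => (![true,true,true] : Fin 3 → Bool) i = true)
      = {0,1,2} := by decide
  rw [e0, e1, e2, e12, e3, e13, e23, e123]
  have s12 : ∑ i ∈ ({0,1} : Finset (Fin 3)), (![a,b,c] : Fin 3 → G) i = a + b := by
    rw [Finset.sum_insert (by decide), Finset.sum_singleton]; rfl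
  have s13 : ∑ i ∈ ({0,2} : Finset (Fin 3)), (![a,b,c] : Fin 3 → G) i = a + c := by
    rw [Finset.sum_insert (by decide), Finset.sum_singleton]; rfl
  have s23 : ∑ i ∈ ({1,2} : Finset (Fin 3)), (![a,b,c] : Fin 3 → G) i = b + c := by
    rw [Finset.sum_insert (by decide), Finset.sum_singleton]; rfl
  have s123 : ∑ i ∈ ({0,1,2} : Finset (Fin 3)), (![a,b,c] : Fin 3 → G) i = a + (b + c) := by
    rw [Finset.sum_insert (by decide), Finset.sum_insert (by decide), Finset.sum_singleton]; rfl
  have c2 : ({0,1} : Finset (Fin 3)).card = 2 := by decide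
  have c2' : ({0,2} : Finset (Fin 3)).card = 2 := by decide
  have c2'' : ({1,2} : Finset (Fin 3)).card = 2 := by decide
  have c3 : ({0,1,2} : Finset (Fin 3)).card = 3 := by decide
  rw [s12, s13, s23, s123, c2, c2', c2'', c3]
  simp only [Finset.sum_empty, Finset.sum_singleton, Finset.card_empty, Finset.card_singleton,
    Matrix.cons_val_zero, Matrix.cons_val_one, Matrix.head_cons, Function.iterate_one,
    Function.iterate_zero, id_eq, conj2, conj3, add_zero]
  show _ = _
  simp only [cD, map_mul, Complex.conj_conj, add_assoc]
  have : (![a,b,c] : Fin 3 → G) 2 = c := rfl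
  rw [this]
  ring

lemma U3_expand (f : G → ℂ) :
    (∑ x : G, ∑ h : Fin 3 → G, ∏ ω : Fin 3 → Bool,
        (starRingEnd ℂ)^[(univ.filter fun i => ω i = true).card]
          (f (x + ∑ i ∈ univ.filter (fun i => ω i = true), h i)))
      = ∑ c : G, ((Tg (cD f c) : ℝ) : ℂ) := by
  have step1 : (∑ x : G, ∑ h : Fin 3 → G, ∏ ω : Fin 3 → Bool,
        (starRingEnd ℂ)^[(univ.filter fun i => ω i = true).card]
          (f (x + ∑ i ∈ univ.filter (fun i => ω i = true), h i)))
      = ∑ x : G, ∑ a : G, ∑ b : G, ∑ c : G,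
          (starRingEnd ℂ) (cD f c x * (starRingEnd ℂ) (cD f c (x+a)) *
            (starRingEnd ℂ) (cD f c (x+b)) * cD f c (x+a+b)) := by
    refine Finset.sum_congr rfl fun x _ => ?_
    rw [sum_fin3 (fun h => ∏ ω : Fin 3 → Bool,
        (starRingEnd ℂ)^[(univ.filter fun i => ω i = true).card]
          (f (x + ∑ i ∈ univ.filter (fun i => ω i = true), h i)))]
    refine Finset.sum_congr rfl fun a _ => Finset.sum_congr rfl fun b _ => ?_
    refine Finset.sum_congr rfl fun c _ => integrand f x a b c
  rw [step1]
  have step2 : ∀ (K : G → G → G → G → ℂ),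
      ∑ x : G, ∑ a : G, ∑ b : G, ∑ c : G, K x a b c
        = ∑ c : G, ∑ x : G, ∑ a : G, ∑ b : G, K x a b c := by
    intro K
    rw [show (∑ x : G, ∑ a : G, ∑ b : G, ∑ c : G, K x a b c)
        = ∑ x : G, ∑ a : G, ∑ c : G, ∑ b : G, K x a b c from
      Finset.sum_congr rfl fun x _ => Finset.sum_congr rfl fun a _ => Finset.sum_comm]
    rw [show (∑ x : G, ∑ a : G, ∑ c : G, ∑ b : G, K x a b c)
        = ∑ x : G, ∑ c : G, ∑ a : G, ∑ b : G, K x a b c from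
      Finset.sum_congr rfl fun x _ => Finset.sum_comm]
    exact Finset.sum_comm
  rw [step2]
  refine Finset.sum_congr rfl fun c _ => ?_
  have : ∑ x : G, ∑ a : G, ∑ b : G,
      (starRingEnd ℂ) (cD f c x * (starRingEnd ℂ) (cD f c (x+a)) *
        (starRingEnd ℂ) (cD f c (x+b)) * cD f c (x+a+b))
      = (starRingEnd ℂ) (∑ x : G, ∑ a : G, ∑ b : G,
          (cD f c x * (starRingEnd ℂ) (cD f c (x+a)) *
            (starRingEnd ℂ) (cD f c (x+b)) * cD f c (x+a+b))) := by
    simp [map_sum]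
  rw [this, U2_expand (cD f c), Complex.conj_ofReal]

noncomputable def dd (f : G → ℂ) (h : G) (ξ : G →+ AddCircle (1:ℝ)) : ℂ :=
  ∑ x : G, f (x + h) * (starRingEnd ℂ) (f x) * ee (-(ξ x))

lemma parseval_neg (u : G → ℂ) :
    ∑ ξ : G →+ AddCircle (1:ℝ), Complex.normSq (∑ x : G, u x * ee (-(ξ x)))
      = (Fintype.card G : ℝ) * ∑ x : G, Complex.normSq (u x) := by
  classical
  have key : ∑ ξ : G →+ AddCircle (1:ℝ),
      ((∑ x : G, u x * ee (-(ξ x))) * (starRingEnd ℂ) (∑ y : G, u y * ee (-(ξ y))))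
      = (Fintype.card G : ℂ) * ∑ x : G, u x * (starRingEnd ℂ) (u x) := by
    have expand : ∀ ξ : G →+ AddCircle (1:ℝ),
        (∑ x : G, u x * ee (-(ξ x))) * (starRingEnd ℂ) (∑ y : G, u y * ee (-(ξ y)))
          = ∑ x : G, ∑ y : G, u x * (starRingEnd ℂ) (u y) * ee (ξ (y - x)) := by
      intro ξ
      rw [map_sum, Finset.sum_mul_sum]
      refine Finset.sum_congr rfl fun x _ => Finset.sum_congr rfl fun y _ => ?_
      rw [map_mul, ee_conj, neg_neg, map_sub, ee_sub, ee_conj]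
      ring
    rw [Finset.sum_congr rfl fun ξ _ => expand ξ]
    rw [Finset.sum_comm]
    rw [Finset.sum_congr rfl fun x _ => Finset.sum_comm]
    have inner : ∀ x y : G, ∑ ξ : G →+ AddCircle (1:ℝ), u x * (starRingEnd ℂ) (u y) * ee (ξ (y - x))
        = u x * (starRingEnd ℂ) (u y) * (if y - x = 0 then (Fintype.card G : ℂ) else 0) := by
      intro x y
      rw [← Finset.mul_sum, sum_ee]
    rw [Finset.sum_congr rfl fun x _ => Finset.sum_congr rfl fun y _ => inner x y]
    rw [Finset.mul_sum]
    refine Finset.sum_congr rfl fun x _ => ?_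
    rw [Finset.sum_eq_single x]
    · simp [mul_comm]
    · intro y _ hy
      simp [sub_eq_zero, hy]
    · intro h
      exact absurd (Finset.mem_univ x) h
  have lhs : ((∑ ξ : G →+ AddCircle (1:ℝ), Complex.normSq (∑ x : G, u x * ee (-(ξ x))) : ℝ) : ℂ)
      = ∑ ξ : G →+ AddCircle (1:ℝ),
          ((∑ x : G, u x * ee (-(ξ x))) * (starRingEnd ℂ) (∑ y : G, u y * ee (-(ξ y)))) := by
    push_cast
    exact Finset.sum_congr rfl fun ξ _ => (Complex.mul_conj _).symm
  have rhs : (((Fintype.card G : ℝ) * ∑ x : G, Complex.normSq (u x) : ℝ) : ℂ)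
      = (Fintype.card G : ℂ) * ∑ x : G, u x * (starRingEnd ℂ) (u x) := by
    push_cast
    rw [Finset.sum_congr rfl fun x _ => (Complex.mul_conj _).symm]
  exact_mod_cast lhs.trans (key.trans rhs.symm)

lemma parseval_pos (u : G → ℂ) :
    ∑ ξ : G →+ AddCircle (1:ℝ), Complex.normSq (∑ x : G, u x * ee (ξ x))
      = (Fintype.card G : ℝ) * ∑ x : G, Complex.normSq (u x) := by
  rw [← parseval_neg u]
  rw [← Equiv.sum_comp (Equiv.neg (G →+ AddCircle (1:ℝ)))
    (fun ξ => Complex.normSq (∑ x : G, u x * ee (-(ξ x))))]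
  refine Finset.sum_congr rfl fun ξ _ => ?_
  congr 1
  refine Finset.sum_congr rfl fun x _ => ?_
  congr 1
  rw [Equiv.neg_apply]
  congr 1
  simp

lemma fourier_c2 (g : G → ℂ) (ξ : G →+ AddCircle (1:ℝ)) :
    ∑ s : G, (∑ x : G, g x * (starRingEnd ℂ) (g (x+s))) * ee (ξ s)
      = ((Complex.normSq (∑ x : G, g x * ee (-(ξ x))) : ℝ) : ℂ) := by
  rw [← Complex.mul_conj]
  rw [map_sum, Finset.sum_mul_sum]
  have : ∀ s : G, (∑ x : G, g x * (starRingEnd ℂ) (g (x+s))) * ee (ξ s)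
      = ∑ x : G, g x * (starRingEnd ℂ) (g (x+s)) * ee (ξ s) := fun s => Finset.sum_mul _ _ _
  rw [Finset.sum_congr rfl fun s _ => this s, Finset.sum_comm]
  refine Finset.sum_congr rfl fun x _ => ?_
  rw [← Equiv.sum_comp (Equiv.addLeft x)
    (fun y => g x * ee (-(ξ x)) * (starRingEnd ℂ) (g y * ee (-(ξ y))))]
  refine Finset.sum_congr rfl fun s _ => ?_
  simp only [Equiv.coe_addLeft]
  rw [map_mul, ee_conj, neg_neg, map_add, ee_add]
  have h1 : ee (-(ξ x)) * ee (ξ x) = 1 := by rw [← ee_add, neg_add_cancel, ee_zero]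
  calc g x * (starRingEnd ℂ) (g (x + s)) * ee (ξ s)
      = (ee (-(ξ x)) * ee (ξ x)) * (g x * (starRingEnd ℂ) (g (x + s)) * ee (ξ s)) := by
        rw [h1, one_mul]
    _ = g x * ee (-(ξ x)) * ((starRingEnd ℂ) (g (x + s)) * (ee (ξ x) * ee (ξ s))) := by ring

lemma N_mul_Tg (g : G → ℂ) :
    (Fintype.card G : ℝ) * Tg g
      = ∑ ξ : G →+ AddCircle (1:ℝ), (Complex.normSq (∑ x : G, g x * ee (-(ξ x))))^2 := by
  rw [Tg, ← parseval_pos (fun s => ∑ x : G, g x * (starRingEnd ℂ) (g (x+s)))]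
  refine Finset.sum_congr rfl fun ξ _ => ?_
  rw [fourier_c2 g ξ, Complex.normSq_ofReal]
  ring

lemma ee_neg_apply_sub (ξ : G →+ AddCircle (1:ℝ)) (x y : G) :
    ee (-(ξ (x - y))) = ee (ξ y) * ee (-(ξ x)) := by
  rw [map_sub, neg_sub, ee_sub, ee_conj]

lemma sum_comm_uH {β M : Type*} [AddCommMonoid M] (H : Finset β) (P : G → β → M) :
    ∑ x : G, ∑ h ∈ H, P x h = ∑ h ∈ H, ∑ x : G, P x h := Finset.sum_comm

lemma key1 (f : G → ℂ) (hf : ∀ x, norm (f x) ≤ 1) (H : Finset G)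
    (ζ : G → (G →+ AddCircle (1:ℝ))) :
    (∑ h ∈ H, Complex.normSq (dd f h (ζ h)))^2
      ≤ ((Fintype.card G : ℝ))^2 *
          ∑ h ∈ H, ∑ h' ∈ H, Complex.normSq (dd f (h - h') (ζ h - ζ h')) := by
  set N : ℝ := (Fintype.card G : ℝ)
  set A : G → G → ℂ := fun x y => ∑ h ∈ H, f (x+h) * (starRingEnd ℂ) (f (y+h))
      * ee (-((ζ h) (x - y))) with hA
  set S : ℝ := ∑ h ∈ H, Complex.normSq (dd f h (ζ h)) with hS
  -- (k1)
  have k1 : (S : ℂ) = ∑ x : G, ∑ y : G, ((starRingEnd ℂ) (f x) * f y) * A x y := by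
    rw [hS]
    push_cast
    rw [Finset.sum_congr rfl fun h _ => (Complex.mul_conj _).symm]
    rw [Finset.sum_congr rfl (fun h _ => by
      rw [dd, map_sum, Finset.sum_mul_sum] :
        ∀ h ∈ H, (dd f h (ζ h)) * (starRingEnd ℂ) (dd f h (ζ h)) = _)]
    rw [Finset.sum_comm]
    refine Finset.sum_congr rfl fun x _ => ?_
    rw [Finset.sum_comm]
    refine Finset.sum_congr rfl fun y _ => ?_
    rw [hA]
    simp only
    rw [Finset.mul_sum]
    refine Finset.sum_congr rfl fun h _ => ?_
    rw [ee_neg_apply_sub (ζ h) x y]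
    simp only [map_mul, Complex.conj_conj, ee_conj, neg_neg]
    ring
  -- (k2)
  have k2 : S ≤ ∑ x : G, ∑ y : G, norm (A x y) := by
    have hS0 : S = norm ((S : ℂ)) := by
      rw [Complex.norm_of_nonneg]
      exact Finset.sum_nonneg fun _ _ => Complex.normSq_nonneg _
    rw [hS0, k1]
    refine le_trans (norm_sum_le _ _) ?_
    refine Finset.sum_le_sum fun x _ => ?_
    refine le_trans (norm_sum_le _ _) ?_
    refine Finset.sum_le_sum fun y _ => ?_
    rw [norm_mul]
    calc norm ((starRingEnd ℂ) (f x) * f y) * norm (A x y)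
        ≤ 1 * norm (A x y) := by
          refine mul_le_mul_of_nonneg_right ?_ (norm_nonneg _)
          rw [norm_mul, Complex.norm_conj]
          calc norm (f x) * norm (f y) ≤ 1 * 1 :=
            mul_le_mul (hf x) (hf y) (norm_nonneg _) zero_le_one
          _ = 1 := mul_one 1
      _ = norm (A x y) := one_mul _
  -- (k3)
  have k3 : (∑ x : G, ∑ y : G, norm (A x y))^2
      ≤ N^2 * ∑ x : G, ∑ y : G, Complex.normSq (A x y) := by
    have := Finset.sum_mul_sq_le_sq_mul_sq (univ : Finset (G × G)) (fun _ => (1:ℝ))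
      (fun p => norm (A p.1 p.2))
    simp only [one_pow, one_mul, Finset.sum_const, Finset.card_univ, nsmul_eq_mul,
      mul_one] at this
    calc (∑ x : G, ∑ y : G, norm (A x y))^2
        = (∑ p : G × G, norm (A p.1 p.2))^2 := by rw [Fintype.sum_prod_type]
      _ ≤ (Fintype.card (G × G) : ℝ) * ∑ p : G × G, norm (A p.1 p.2)^2 := this
      _ = N^2 * ∑ x : G, ∑ y : G, Complex.normSq (A x y) := by
          rw [Fintype.card_prod, Fintype.sum_prod_type]
          push_cast
          rw [← Finset.sum_congr rfl fun x (_ : x ∈ univ) => Finset.sum_congr rfl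
            fun y (_ : y ∈ univ) => (Complex.sq_norm (A x y))]
          ring
  -- (k4)
  have k4 : ∑ x : G, ∑ y : G, Complex.normSq (A x y)
      = ∑ h ∈ H, ∑ h' ∈ H, Complex.normSq (dd f (h - h') (ζ h - ζ h')) := by
    have cast_eq : ((∑ x : G, ∑ y : G, Complex.normSq (A x y) : ℝ) : ℂ)
        = ((∑ h ∈ H, ∑ h' ∈ H, Complex.normSq (dd f (h - h') (ζ h - ζ h')) : ℝ) : ℂ) := by
      push_cast
      rw [Finset.sum_congr rfl fun x _ => Finset.sum_congr rfl
        fun y _ => (Complex.mul_conj (A x y)).symm]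
      rw [Finset.sum_congr rfl (fun h _ => Finset.sum_congr rfl fun h' _ =>
        (Complex.mul_conj (dd f (h - h') (ζ h - ζ h'))).symm)]
      -- expand A * conj A
      have expand : ∀ x y : G, A x y * (starRingEnd ℂ) (A x y)
          = ∑ h ∈ H, ∑ h' ∈ H,
              (f (x+h) * (starRingEnd ℂ) (f (y+h)) * ee (-((ζ h) (x - y)))) *
              (starRingEnd ℂ) (f (x+h') * (starRingEnd ℂ) (f (y+h')) * ee (-((ζ h') (x - y)))) := by
        intro x y
        rw [hA]
        simp only
        rw [map_sum, Finset.sum_mul_sum]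
      rw [Finset.sum_congr rfl fun x _ => Finset.sum_congr rfl fun y _ => expand x y]
      -- swap sums: x y h h' → h h' x y
      set T : G → G → G → G → ℂ := fun h h' x y =>
        (f (x+h) * (starRingEnd ℂ) (f (y+h)) * ee (-((ζ h) (x - y)))) *
          (starRingEnd ℂ) (f (x+h') * (starRingEnd ℂ) (f (y+h')) * ee (-((ζ h') (x - y))))
        with hT
      have swapped : ∑ x : G, ∑ y : G, ∑ h ∈ H, ∑ h' ∈ H, T h h' x y
          = ∑ h ∈ H, ∑ h' ∈ H, ∑ x : G, ∑ y : G, T h h' x y := by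
        calc ∑ x : G, ∑ y : G, ∑ h ∈ H, ∑ h' ∈ H, T h h' x y
            = ∑ x : G, ∑ h ∈ H, ∑ y : G, ∑ h' ∈ H, T h h' x y :=
              Finset.sum_congr rfl fun x _ =>
                sum_comm_uH H (fun y h => ∑ h' ∈ H, T h h' x y)
          _ = ∑ h ∈ H, ∑ x : G, ∑ y : G, ∑ h' ∈ H, T h h' x y :=
              sum_comm_uH H (fun x h => ∑ y : G, ∑ h' ∈ H, T h h' x y)
          _ = ∑ h ∈ H, ∑ x : G, ∑ h' ∈ H, ∑ y : G, T h h' x y :=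
              Finset.sum_congr rfl fun h _ => Finset.sum_congr rfl fun x _ =>
                sum_comm_uH H (fun y h' => T h h' x y)
          _ = ∑ h ∈ H, ∑ h' ∈ H, ∑ x : G, ∑ y : G, T h h' x y :=
              Finset.sum_congr rfl fun h _ =>
                sum_comm_uH H (fun x h' => ∑ y : G, T h h' x y)
      rw [swapped]
      refine Finset.sum_congr rfl fun h _ => ?_
      refine Finset.sum_congr rfl fun h' _ => ?_
      -- now goal: ∑ x ∑ y (...) = dd * conj dd
      have factor : ∑ x : G, ∑ y : G,
          (f (x+h) * (starRingEnd ℂ) (f (y+h)) * ee (-((ζ h) (x - y)))) *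
            (starRingEnd ℂ) (f (x+h') * (starRingEnd ℂ) (f (y+h')) * ee (-((ζ h') (x - y))))
          = (∑ x : G, f (x+h) * (starRingEnd ℂ) (f (x+h')) * ee (-((ζ h - ζ h') x))) *
            (starRingEnd ℂ) (∑ y : G, f (y+h) * (starRingEnd ℂ) (f (y+h'))
              * ee (-((ζ h - ζ h') y))) := by
        rw [map_sum, Finset.sum_mul_sum]
        refine Finset.sum_congr rfl fun x _ => Finset.sum_congr rfl fun y _ => ?_
        simp only [map_mul, Complex.conj_conj, ee_conj, neg_neg, AddMonoidHom.sub_apply,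
          map_sub, neg_sub, ee_sub, ee_add]
        ring
      rw [factor]
      -- now shift: w = ee(ξ'' h') * dd
      have shift : (∑ x : G, f (x+h) * (starRingEnd ℂ) (f (x+h')) * ee (-((ζ h - ζ h') x)))
          = ee ((ζ h - ζ h') h') * dd f (h - h') (ζ h - ζ h') := by
        rw [dd, Finset.mul_sum]
        rw [← Equiv.sum_comp (Equiv.subRight h')
          (fun x => f (x+h) * (starRingEnd ℂ) (f (x+h')) * ee (-((ζ h - ζ h') x)))]
        refine Finset.sum_congr rfl fun x _ => ?_
        simp only [Equiv.subRight_apply]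
        rw [show x - h' + h = x + (h - h') from by abel, sub_add_cancel]
        rw [map_sub (ζ h - ζ h') x h', neg_sub, ee_sub, ee_conj]
        ring
      rw [shift, map_mul, mul_mul_mul_comm, Complex.mul_conj, ee_normSq,
        Complex.ofReal_one, one_mul]
    exact_mod_cast cast_eq
  calc S^2 ≤ (∑ x : G, ∑ y : G, norm (A x y))^2 := by
        refine pow_le_pow_left₀ ?_ k2 2
        rw [hS]
        exact Finset.sum_nonneg fun _ _ => Complex.normSq_nonneg _
    _ ≤ N^2 * ∑ x : G, ∑ y : G, Complex.normSq (A x y) := k3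
    _ = N^2 * ∑ h ∈ H, ∑ h' ∈ H, Complex.normSq (dd f (h - h') (ζ h - ζ h')) := by rw [k4]

lemma dd_eq_sum (f : G → ℂ) (h : G) (ξ : G →+ AddCircle (1:ℝ)) :
    dd f h ξ = ∑ x : G, cD f h x * ee (-(ξ x)) := rfl

lemma normSq_cD_le (f : G → ℂ) (hf : ∀ x, norm (f x) ≤ 1) (c x : G) :
    Complex.normSq (cD f c x) ≤ 1 := by
  rw [← Complex.sq_norm, cD]
  have : norm (f (x + c) * (starRingEnd ℂ) (f x)) ≤ 1 := by
    rw [norm_mul, Complex.norm_conj]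
    calc norm (f (x+c)) * norm (f x) ≤ 1 * 1 :=
      mul_le_mul (hf _) (hf _) (norm_nonneg _) zero_le_one
    _ = 1 := mul_one 1
  calc norm (f (x + c) * (starRingEnd ℂ) (f x)) ^ 2 ≤ 1 ^ 2 :=
    pow_le_pow_left₀ (norm_nonneg _) this 2
  _ = 1 := one_pow 2

lemma abs_dd_le (f : G → ℂ) (hf : ∀ x, norm (f x) ≤ 1) (h : G)
    (ξ : G →+ AddCircle (1:ℝ)) : norm (dd f h ξ) ≤ (Fintype.card G : ℝ) := by
  rw [dd]
  refine le_trans (norm_sum_le _ _) ?_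
  have : ∀ x : G, norm (f (x + h) * (starRingEnd ℂ) (f x) * ee (-(ξ x))) ≤ 1 := by
    intro x
    rw [norm_mul, norm_mul, Complex.norm_conj, ee_abs, mul_one]
    calc norm (f (x+h)) * norm (f x) ≤ 1 * 1 :=
      mul_le_mul (hf _) (hf _) (norm_nonneg _) zero_le_one
    _ = 1 := mul_one 1
  calc ∑ x : G, norm (f (x + h) * (starRingEnd ℂ) (f x) * ee (-(ξ x)))
      ≤ ∑ _x : G, (1:ℝ) := Finset.sum_le_sum fun x _ => this x
  _ = (Fintype.card G : ℝ) := by simp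

lemma normSq_dd_le (f : G → ℂ) (hf : ∀ x, norm (f x) ≤ 1) (h : G)
    (ξ : G →+ AddCircle (1:ℝ)) :
    Complex.normSq (dd f h ξ) ≤ (Fintype.card G : ℝ)^2 := by
  rw [← Complex.sq_norm]
  exact pow_le_pow_left₀ (norm_nonneg _) (abs_dd_le f hf h ξ) 2

lemma sum_normSq_dd_le (f : G → ℂ) (hf : ∀ x, norm (f x) ≤ 1) (h : G) :
    ∑ ξ : G →+ AddCircle (1:ℝ), Complex.normSq (dd f h ξ) ≤ (Fintype.card G : ℝ)^2 := by
  have : ∀ ξ : G →+ AddCircle (1:ℝ), Complex.normSq (dd f h ξ)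
      = Complex.normSq (∑ x : G, cD f h x * ee (-(ξ x))) := fun ξ => by rw [← dd_eq_sum]
  rw [Finset.sum_congr rfl fun ξ _ => this ξ, parseval_neg (cD f h)]
  calc (Fintype.card G : ℝ) * ∑ x : G, Complex.normSq (cD f h x)
      ≤ (Fintype.card G : ℝ) * ∑ _x : G, (1:ℝ) := by
        refine mul_le_mul_of_nonneg_left ?_ (Nat.cast_nonneg _)
        exact Finset.sum_le_sum fun x _ => normSq_cD_le f hf h x
  _ = (Fintype.card G : ℝ)^2 := by simp [sq]

lemma Tg_le_max (f : G → ℂ) (hf : ∀ x, norm (f x) ≤ 1) (h : G)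
    (ξ0 : G →+ AddCircle (1:ℝ))
    (hmax : ∀ ξ : G →+ AddCircle (1:ℝ), Complex.normSq (dd f h ξ) ≤ Complex.normSq (dd f h ξ0)) :
    (Fintype.card G : ℝ) * Tg (cD f h)
      ≤ Complex.normSq (dd f h ξ0) * (Fintype.card G : ℝ)^2 := by
  have e : (Fintype.card G : ℝ) * Tg (cD f h)
      = ∑ ξ : G →+ AddCircle (1:ℝ), (Complex.normSq (dd f h ξ))^2 := by
    rw [N_mul_Tg (cD f h)]
    exact Finset.sum_congr rfl fun ξ _ => by rw [← dd_eq_sum]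
  rw [e]
  calc ∑ ξ : G →+ AddCircle (1:ℝ), (Complex.normSq (dd f h ξ))^2
      ≤ ∑ ξ : G →+ AddCircle (1:ℝ), Complex.normSq (dd f h ξ0) * Complex.normSq (dd f h ξ) := by
        refine Finset.sum_le_sum fun ξ _ => ?_
        rw [sq]
        exact mul_le_mul_of_nonneg_right (hmax ξ) (Complex.normSq_nonneg _)
  _ = Complex.normSq (dd f h ξ0) * ∑ ξ : G →+ AddCircle (1:ℝ), Complex.normSq (dd f h ξ) := by
        rw [Finset.mul_sum]
  _ ≤ Complex.normSq (dd f h ξ0) * (Fintype.card G : ℝ)^2 :=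
        mul_le_mul_of_nonneg_left (sum_normSq_dd_le f hf h) (Complex.normSq_nonneg _)

end GU3
open GU3 in
/-- **Large `U³` norm gives many additive quadruples**: if `f : G → 𝒟` has `‖f‖_{U³} ≥ η`,
then there are `H ⊆ G` and `ξ : H → Ĝ` whose graph `Γ = {(h,ξ_h) : h ∈ H} ⊆ G × Ĝ`
contains at least `2^{-8} η^{64} N³` additive quadruples `z₁ + z₂ = z₃ + z₄`, and moreover
`|𝔼_x f(x+h) conj(f(x)) e(-ξ_h·x)| ≥ η⁴/2^{1/2}` for every `h ∈ H`. -/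
theorem large_U3_gives_additive_quadruples {G : Type*} [AddCommGroup G] [Fintype G]
    (η : ℝ) (hη : 0 < η) (f : G → ℂ) (hf : ∀ x, norm (f x) ≤ 1)
    (hU3 : η ≤ gowersNorm 3 f) :
    ∃ (H : Set G) (ξ : G → (G →+ AddCircle (1 : ℝ)))
      (Γ : Set (G × (G →+ AddCircle (1 : ℝ)))),
      Γ = {p | p.1 ∈ H ∧ p.2 = ξ p.1} ∧
      (2 : ℝ) ^ (-(8 : ℤ)) * η ^ 64 * (Fintype.card G : ℝ) ^ 3 ≤
        (({z : (G × (G →+ AddCircle (1 : ℝ))) × (G × (G →+ AddCircle (1 : ℝ))) ×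
              (G × (G →+ AddCircle (1 : ℝ))) × (G × (G →+ AddCircle (1 : ℝ))) |
            z.1 ∈ Γ ∧ z.2.1 ∈ Γ ∧ z.2.2.1 ∈ Γ ∧ z.2.2.2 ∈ Γ ∧
              z.1 + z.2.1 = z.2.2.1 + z.2.2.2}).ncard : ℝ) ∧
      ∀ h ∈ H,
        η ^ 4 / Real.sqrt 2 ≤
          norm ((Fintype.card G : ℂ)⁻¹ *
            ∑ x : G, f (x + h) * (starRingEnd ℂ) (f x) * ee (-(ξ h x))) := by
  classical
  set N : ℝ := (Fintype.card G : ℝ) with hN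
  have hN1 : (1:ℝ) ≤ N := by
    rw [hN]; exact_mod_cast Fintype.card_pos
  have hN0 : (0:ℝ) < N := lt_of_lt_of_le zero_lt_one hN1
  -- Step 2 : η^8 * N^4 ≤ R
  set R : ℝ := ∑ c : G, Tg (cD f c) with hR
  have hR0 : (0:ℝ) ≤ R := Finset.sum_nonneg fun c _ => Tg_nonneg _
  have hRU : gowersNorm 3 f = ((N^4)⁻¹ * R) ^ (((2:ℝ)^3)⁻¹) := by
    rw [gowersNorm, U3_expand f]
    congr 1
    have e1 : ((Fintype.card G : ℂ) ^ (3+1))⁻¹ * ∑ c : G, ((Tg (cD f c) : ℝ) : ℂ)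
        = (((N^4)⁻¹ * R : ℝ) : ℂ) := by
      rw [hR, hN]
      push_cast
      ring
    rw [e1, Complex.norm_of_nonneg (by positivity)]
  have h8 : η^8 ≤ (N^4)⁻¹ * R := by
    have h1 : η^8 ≤ (gowersNorm 3 f)^8 := pow_le_pow_left₀ hη.le hU3 8
    rw [hRU] at h1
    have hc : (0:ℝ) ≤ (N^4)⁻¹ * R := by positivity
    calc η^8 ≤ ((((N^4)⁻¹ * R) ^ (((2:ℝ)^3)⁻¹)))^(8:ℕ) := h1
      _ = (N^4)⁻¹ * R := by
          rw [← Real.rpow_natCast ((((N^4)⁻¹ * R) ^ (((2:ℝ)^3)⁻¹))) 8,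
            ← Real.rpow_mul hc]
          norm_num
  have hstep2 : η^8 * N^4 ≤ R := by
    have := mul_le_mul_of_nonneg_right h8 (le_of_lt (by positivity : (0:ℝ) < N^4))
    calc η^8 * N^4 ≤ ((N^4)⁻¹ * R) * N^4 := this
      _ = R := by field_simp
  -- argmax
  have hex : ∀ h : G, ∃ ξ0 : G →+ AddCircle (1:ℝ),
      ∀ ξ : G →+ AddCircle (1:ℝ),
        Complex.normSq (dd f h ξ) ≤ Complex.normSq (dd f h ξ0) := by
    intro h
    obtain ⟨ξ0, _, hmax⟩ := Finset.exists_max_image Finset.univ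
      (fun ξ : G →+ AddCircle (1:ℝ) => Complex.normSq (dd f h ξ)) ⟨0, Finset.mem_univ 0⟩
    exact ⟨ξ0, fun ξ => hmax ξ (Finset.mem_univ ξ)⟩
  choose ζ hζ using hex
  set M : G → ℝ := fun h => Complex.normSq (dd f h (ζ h)) with hM
  have hM0 : ∀ h, 0 ≤ M h := fun h => Complex.normSq_nonneg _
  have hMN2 : ∀ h, M h ≤ N^2 := fun h => normSq_dd_le f hf h (ζ h)
  have hsumM : η^8 * N^3 ≤ ∑ h : G, M h := by
    have h1 : N * R ≤ (∑ h : G, M h) * N^2 := by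
      calc N * R = ∑ h : G, N * Tg (cD f h) := by rw [hR, Finset.mul_sum]
        _ ≤ ∑ h : G, M h * N^2 :=
            Finset.sum_le_sum fun h _ => Tg_le_max f hf h (ζ h) (hζ h)
        _ = (∑ h : G, M h) * N^2 := (Finset.sum_mul _ _ _).symm
    have h2 : (η^8 * N^3) * N^2 ≤ (∑ h : G, M h) * N^2 := by
      calc (η^8 * N^3) * N^2 = N * (η^8 * N^4) := by ring
        _ ≤ N * R := mul_le_mul_of_nonneg_left hstep2 hN0.le
        _ ≤ _ := h1
    exact le_of_mul_le_mul_right h2 (by positivity)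
  set Hs : Finset G := Finset.univ.filter (fun h => η^8/2 * N^2 ≤ M h) with hHs
  have hcardH : η^8/2 * N ≤ (Hs.card : ℝ) := by
    have b1 : ∑ h ∈ Hs, M h ≤ (Hs.card : ℝ) * N^2 := by
      have := Finset.sum_le_card_nsmul Hs M (N^2) (fun h _ => hMN2 h)
      rwa [nsmul_eq_mul] at this
    have b2 : ∑ h ∈ Finset.univ.filter (fun h => ¬ (η^8/2 * N^2 ≤ M h)), M h
        ≤ η^8/2 * N^2 * N := by
      have c1 := Finset.sum_le_card_nsmul
        (Finset.univ.filter (fun h => ¬ (η^8/2 * N^2 ≤ M h))) M (η^8/2 * N^2)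
        (fun h hh => le_of_lt (lt_of_not_ge (Finset.mem_filter.mp hh).2))
      rw [nsmul_eq_mul] at c1
      refine le_trans c1 ?_
      have c2 : ((Finset.univ.filter (fun h => ¬ (η^8/2 * N^2 ≤ M h))).card : ℝ) ≤ N := by
        rw [hN]
        exact_mod_cast Finset.card_filter_le _ _
      have c3 : (0:ℝ) ≤ η^8/2 * N^2 := by positivity
      calc ((Finset.univ.filter (fun h => ¬ (η^8/2 * N^2 ≤ M h))).card : ℝ) * (η^8/2 * N^2)
          ≤ N * (η^8/2 * N^2) := mul_le_mul_of_nonneg_right c2 c3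
        _ = η^8/2 * N^2 * N := by ring
    have hsplit := Finset.sum_filter_add_sum_filter_not Finset.univ
      (fun h => η^8/2 * N^2 ≤ M h) M
    have key : η^8 * N^3 ≤ (Hs.card : ℝ) * N^2 + η^8/2 * N^2 * N := by
      rw [← hsplit] at hsumM
      exact le_trans hsumM (add_le_add b1 b2)
    have : (η^8/2 * N) * N^2 ≤ (Hs.card : ℝ) * N^2 := by nlinarith
    exact le_of_mul_le_mul_right this (by positivity)
  set S : ℝ := ∑ h ∈ Hs, M h with hS
  have hSlb : η^16/4 * N^3 ≤ S := by
    have h1 : (Hs.card : ℝ) * (η^8/2 * N^2) ≤ S := by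
      have := Finset.card_nsmul_le_sum Hs M (η^8/2 * N^2)
        (fun h hh => (Finset.mem_filter.mp hh).2)
      rwa [nsmul_eq_mul] at this
    have h2 : (η^8/2 * N) * (η^8/2 * N^2) ≤ (Hs.card : ℝ) * (η^8/2 * N^2) :=
      mul_le_mul_of_nonneg_right hcardH (by positivity)
    calc η^16/4 * N^3 = (η^8/2 * N) * (η^8/2 * N^2) := by ring
      _ ≤ (Hs.card : ℝ) * (η^8/2 * N^2) := h2
      _ ≤ S := h1
  -- Key Cauchy-Schwarz
  set W : ℝ := ∑ h ∈ Hs, ∑ h' ∈ Hs, Complex.normSq (dd f (h - h') (ζ h - ζ h')) with hW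
  have hW0 : 0 ≤ W :=
    Finset.sum_nonneg fun _ _ => Finset.sum_nonneg fun _ _ => Complex.normSq_nonneg _
  have hK : S^2 ≤ N^2 * W := key1 f hf Hs ζ
  -- energy setup
  set π : G × G → G × (G →+ AddCircle (1:ℝ)) := fun p => (p.1 - p.2, ζ p.1 - ζ p.2) with hπ
  set P : Finset (G × G) := Hs ×ˢ Hs with hP
  set V : Finset (G × (G →+ AddCircle (1:ℝ))) := P.image π with hV
  set rv : G × (G →+ AddCircle (1:ℝ)) → ℕ := fun v => (P.filter (fun p => π p = v)).card with hrv
  have hWP : W = ∑ p ∈ P, Complex.normSq (dd f (π p).1 (π p).2) := by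
    rw [hW, hP, Finset.sum_product]
  have hcomp : W = ∑ v ∈ V, (rv v : ℝ) * Complex.normSq (dd f v.1 v.2) := by
    rw [hWP, Finset.sum_comp (fun v : G × (G →+ AddCircle (1:ℝ)) =>
      Complex.normSq (dd f v.1 v.2)) π]
    exact Finset.sum_congr rfl fun v _ => by rw [nsmul_eq_mul]
  have hCS : W^2 ≤ (∑ v ∈ V, ((rv v : ℝ))^2)
      * (∑ v ∈ V, (Complex.normSq (dd f v.1 v.2))^2) := by
    rw [hcomp]
    exact Finset.sum_mul_sq_le_sq_mul_sq V _ _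
  have hE2 : ∑ v ∈ V, (Complex.normSq (dd f v.1 v.2))^2 ≤ N^5 := by
    have p1 : ∀ v ∈ V, (Complex.normSq (dd f v.1 v.2))^2
        ≤ N^2 * Complex.normSq (dd f v.1 v.2) := by
      intro v _
      rw [sq]
      exact mul_le_mul_of_nonneg_right (normSq_dd_le f hf v.1 v.2) (Complex.normSq_nonneg _)
    calc ∑ v ∈ V, (Complex.normSq (dd f v.1 v.2))^2
        ≤ ∑ v ∈ V, N^2 * Complex.normSq (dd f v.1 v.2) := Finset.sum_le_sum p1
      _ = N^2 * ∑ v ∈ V, Complex.normSq (dd f v.1 v.2) := by rw [Finset.mul_sum]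
      _ ≤ N^2 * ∑ v : G × (G →+ AddCircle (1:ℝ)), Complex.normSq (dd f v.1 v.2) := by
          refine mul_le_mul_of_nonneg_left ?_ (by positivity)
          exact Finset.sum_le_sum_of_subset_of_nonneg (Finset.subset_univ V)
            (fun v _ _ => Complex.normSq_nonneg _)
      _ = N^2 * ∑ a : G, ∑ ξ : G →+ AddCircle (1:ℝ), Complex.normSq (dd f a ξ) := by
          rw [Fintype.sum_prod_type]
      _ ≤ N^2 * ∑ _a : G, N^2 := by
          refine mul_le_mul_of_nonneg_left ?_ (by positivity)
          exact Finset.sum_le_sum fun a _ => sum_normSq_dd_le f hf a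
      _ = N^5 := by
          rw [Finset.sum_const, Finset.card_univ, nsmul_eq_mul, ← hN]; ring
  set Qr : ℕ := ∑ v ∈ V, rv v * rv v with hQr
  have hQrW : W^2 ≤ (Qr : ℝ) * N^5 := by
    have e1 : (∑ v ∈ V, ((rv v:ℝ))^2) = (Qr:ℝ) := by
      rw [hQr]
      push_cast
      exact Finset.sum_congr rfl fun v _ => sq (rv v : ℝ) ▸ by ring
    calc W^2 ≤ (∑ v ∈ V, ((rv v : ℝ))^2) * (∑ v ∈ V, (Complex.normSq (dd f v.1 v.2))^2) := hCS
      _ ≤ (∑ v ∈ V, ((rv v : ℝ))^2) * N^5 := by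
          refine mul_le_mul_of_nonneg_left hE2 ?_
          exact Finset.sum_nonneg fun v _ => sq_nonneg _
      _ = (Qr:ℝ) * N^5 := by rw [e1]
  have hQlb : η^64/256 * N^3 ≤ (Qr : ℝ) := by
    have t1 : (η^16/4 * N^3)^4 ≤ S^4 := pow_le_pow_left₀ (by positivity) hSlb 4
    have t2 : S^4 ≤ (N^2 * W)^2 := by
      calc S^4 = (S^2)^2 := by ring
        _ ≤ (N^2*W)^2 := pow_le_pow_left₀ (sq_nonneg S) hK 2
    have t4 : (η^16/4*N^3)^4 ≤ N^4 * ((Qr:ℝ) * N^5) := by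
      calc (η^16/4*N^3)^4 ≤ S^4 := t1
        _ ≤ (N^2*W)^2 := t2
        _ = N^4 * W^2 := by ring
        _ ≤ N^4 * ((Qr:ℝ)*N^5) := mul_le_mul_of_nonneg_left hQrW (by positivity)
    have t5 : (η^64/256 * N^3) * N^9 ≤ (Qr:ℝ) * N^9 := by
      calc (η^64/256 * N^3) * N^9 = (η^16/4*N^3)^4 := by ring
        _ ≤ N^4 * ((Qr:ℝ)*N^5) := t4
        _ = (Qr:ℝ) * N^9 := by ring
    exact le_of_mul_le_mul_right t5 (by positivity)
  -- counting
  set Pairs : Finset ((G×G) × (G×G)) := (P ×ˢ P).filter (fun pq => π pq.1 = π pq.2) with hPairs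
  have hfib : ∀ v ∈ V, (Pairs.filter (fun pq => π pq.1 = v)).card = rv v * rv v := by
    intro v _
    have e : Pairs.filter (fun pq => π pq.1 = v)
        = (P.filter (fun p => π p = v)) ×ˢ (P.filter (fun p => π p = v)) := by
      ext pq
      simp only [hPairs, Finset.mem_filter, Finset.mem_product]
      constructor
      · rintro ⟨⟨⟨m1, m2⟩, m3⟩, m4⟩
        exact ⟨⟨m1, m4⟩, m2, by rw [← m3, m4]⟩
      · rintro ⟨⟨m1, m2⟩, m3, m4⟩
        exact ⟨⟨⟨m1, m3⟩, by rw [m2, m4]⟩, m2⟩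
    rw [e, Finset.card_product]
  have hPairsQ : Pairs.card = Qr := by
    rw [Finset.card_eq_sum_card_fiberwise (f := fun pq => π pq.1) (t := V)
      (fun pq hpq => ?_)]
    · exact Finset.sum_congr rfl hfib
    · rw [hPairs] at hpq
      obtain ⟨hm, _⟩ := Finset.mem_filter.mp hpq
      exact Finset.mem_image_of_mem π (Finset.mem_product.mp hm).1
  -- assemble
  refine ⟨(↑Hs : Set G), ζ, {p | p.1 ∈ (↑Hs : Set G) ∧ p.2 = ζ p.1}, rfl, ?_, ?_⟩
  · -- quadruple count
    set Ψ : (G×G) × (G×G) → (G × (G →+ AddCircle (1:ℝ))) × (G × (G →+ AddCircle (1:ℝ)))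
        × (G × (G →+ AddCircle (1:ℝ))) × (G × (G →+ AddCircle (1:ℝ))) :=
      fun pq => ((pq.1.1, ζ pq.1.1), (pq.2.2, ζ pq.2.2), (pq.2.1, ζ pq.2.1),
        (pq.1.2, ζ pq.1.2)) with hΨ
    have hΨinj : Function.Injective Ψ := by
      have hli : Function.LeftInverse (fun z : (G × (G →+ AddCircle (1:ℝ)))
            × (G × (G →+ AddCircle (1:ℝ))) × (G × (G →+ AddCircle (1:ℝ)))
            × (G × (G →+ AddCircle (1:ℝ))) =>
          ((z.1.1, z.2.2.2.1), (z.2.2.1.1, z.2.1.1))) Ψ := fun pq => rfl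
      exact hli.injective
    have hset : {z : (G × (G →+ AddCircle (1 : ℝ))) × (G × (G →+ AddCircle (1 : ℝ))) ×
              (G × (G →+ AddCircle (1 : ℝ))) × (G × (G →+ AddCircle (1 : ℝ))) |
            z.1 ∈ {p | p.1 ∈ (↑Hs : Set G) ∧ p.2 = ζ p.1} ∧
            z.2.1 ∈ {p | p.1 ∈ (↑Hs : Set G) ∧ p.2 = ζ p.1} ∧
            z.2.2.1 ∈ {p | p.1 ∈ (↑Hs : Set G) ∧ p.2 = ζ p.1} ∧
            z.2.2.2 ∈ {p | p.1 ∈ (↑Hs : Set G) ∧ p.2 = ζ p.1} ∧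
              z.1 + z.2.1 = z.2.2.1 + z.2.2.2} = ↑(Pairs.image Ψ) := by
      ext z
      simp only [Set.mem_setOf_eq, Finset.coe_image, Set.mem_image, Finset.mem_coe]
      constructor
      · rintro ⟨⟨m1, e1⟩, ⟨m2, e2⟩, ⟨m3, e3⟩, ⟨m4, e4⟩, heq⟩
        refine ⟨((z.1.1, z.2.2.2.1), (z.2.2.1.1, z.2.1.1)), ?_, ?_⟩
        · rw [hPairs]
          refine Finset.mem_filter.mpr ⟨Finset.mem_product.mpr ⟨?_, ?_⟩, ?_⟩
          · rw [hP]
            exact Finset.mem_product.mpr ⟨Finset.mem_coe.mp m1, Finset.mem_coe.mp m4⟩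
          · rw [hP]
            exact Finset.mem_product.mpr ⟨Finset.mem_coe.mp m3, Finset.mem_coe.mp m2⟩
          · have heq1 : z.1.1 + z.2.1.1 = z.2.2.1.1 + z.2.2.2.1 := by
              rw [Prod.ext_iff] at heq
              have := heq.1
              simp only [Prod.fst_add] at this
              exact this
            have heq2 : ζ z.1.1 + ζ z.2.1.1 = ζ z.2.2.1.1 + ζ z.2.2.2.1 := by
              rw [Prod.ext_iff] at heq
              have := heq.2
              simp only [Prod.snd_add] at this
              rwa [e1, e2, e3, e4] at this
            rw [hπ]
            refine Prod.ext ?_ ?_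
            · exact sub_eq_sub_iff_add_eq_add.mpr heq1
            · exact sub_eq_sub_iff_add_eq_add.mpr heq2
        · rw [hΨ]
          have ez : z = ((z.1.1, ζ z.1.1), (z.2.1.1, ζ z.2.1.1), (z.2.2.1.1, ζ z.2.2.1.1),
              (z.2.2.2.1, ζ z.2.2.2.1)) := by
            rw [← e1, ← e2, ← e3, ← e4]
          exact ez.symm
      · rintro ⟨pq, hpq, rfl⟩
        rw [hPairs] at hpq
        obtain ⟨hm, hπeq⟩ := Finset.mem_filter.mp hpq
        obtain ⟨hp1, hp2⟩ := Finset.mem_product.mp hm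
        rw [hP] at hp1 hp2
        obtain ⟨ha, hb⟩ := Finset.mem_product.mp hp1
        obtain ⟨hc, hd⟩ := Finset.mem_product.mp hp2
        have hπ1 : pq.1.1 - pq.1.2 = pq.2.1 - pq.2.2 := congrArg Prod.fst hπeq
        have hπ2 : ζ pq.1.1 - ζ pq.1.2 = ζ pq.2.1 - ζ pq.2.2 := congrArg Prod.snd hπeq
        refine ⟨⟨Finset.mem_coe.mpr ha, rfl⟩, ⟨Finset.mem_coe.mpr hd, rfl⟩,
          ⟨Finset.mem_coe.mpr hc, rfl⟩, ⟨Finset.mem_coe.mpr hb, rfl⟩, ?_⟩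
        refine Prod.ext ?_ ?_
        · exact sub_eq_sub_iff_add_eq_add.mp hπ1
        · exact sub_eq_sub_iff_add_eq_add.mp hπ2
    rw [hset, Set.ncard_coe_finset, Finset.card_image_of_injective _ hΨinj, hPairsQ]
    have e256 : (2:ℝ)^(-(8:ℤ)) = 1/256 := by norm_num
    calc (2:ℝ)^(-(8:ℤ)) * η^64 * N^3 = η^64/256 * N^3 := by rw [e256]; ring
      _ ≤ (Qr:ℝ) := hQlb
  · -- correlation bound
    intro h hh
    have hhH : h ∈ Hs := Finset.mem_coe.mp hh
    have hMh : η^8/2 * N^2 ≤ M h := (Finset.mem_filter.mp hhH).2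
    have habs : η^4/Real.sqrt 2 * N ≤ norm (dd f h (ζ h)) := by
      have sq2 : (η^4/Real.sqrt 2 * N)^2 = η^8/2 * N^2 := by
        rw [mul_pow, div_pow, Real.sq_sqrt (by norm_num : (0:ℝ) ≤ 2)]
        ring
      have h2 : (η^4/Real.sqrt 2 * N)^2 ≤ (norm (dd f h (ζ h)))^2 := by
        rw [Complex.sq_norm, sq2]
        exact hMh
      have pos1 : 0 ≤ η^4/Real.sqrt 2 * N := by positivity
      have h3 := Real.sqrt_le_sqrt h2
      rwa [Real.sqrt_sq pos1, Real.sqrt_sq (norm_nonneg _)] at h3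
    have eabs : norm ((Fintype.card G : ℂ)⁻¹ *
        ∑ x : G, f (x + h) * (starRingEnd ℂ) (f x) * ee (-(ζ h x)))
        = N⁻¹ * norm (dd f h (ζ h)) := by
      rw [norm_mul, norm_inv, Complex.norm_natCast]
      rfl
    rw [eabs]
    have h4 := mul_le_mul_of_nonneg_left habs (inv_nonneg.mpr hN0.le)
    calc η^4/Real.sqrt 2 = N⁻¹ * (η^4/Real.sqrt 2 * N) := by
          field_simp
      _ ≤ N⁻¹ * norm (dd f h (ζ h)) := h4
end

section
/- Large trilinear form implies correlation with a linear phase: Let G be a finite additive (abelian) group, let B and B′ be nonempty subsets of G, let f : G → ℂ be any function, and let b₁, b₂ : G → ℂ satisfy |b₁(x)| ≤ 1 and |b₂(x)| ≤ 1 for all x. Then there exists ξ ∈ Ĝ such that |𝔼_{z∈B′} f(z) e(−ξ·z)| ≥ (|B| / |B + B′|) · |𝔼_{z∈B′, x∈B} f(z) b₁(x) b₂(z+x)|, where B + B′ := {x + z : x ∈ B, z ∈ B′}. -/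
open Finset Pointwise

/-- The average `𝔼_{x ∈ B} f(x)` of `f : G → ℂ` over a subset `B` of a finite type `G`. -/
noncomputable def expectC {G : Type*} [Fintype G] (B : Set G) (f : G → ℂ) : ℂ :=
  (B.ncard : ℂ)⁻¹ * ∑ x ∈ B.toFinite.toFinset, f x

/-- Parseval-type identity for sums against characters. -/
lemma parseval_aux {G : Type*} [AddCommGroup G] [Fintype G] [DecidableEq G]
    (T : Finset G) (g : G → ℂ) :
    ∑ ψ : AddChar G ℂ, Complex.normSq (∑ w ∈ T, g w * ψ w) =
      (Fintype.card G : ℝ) * ∑ w ∈ T, Complex.normSq (g w) := by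
  have key : ∑ ψ : AddChar G ℂ, ((∑ w ∈ T, g w * ψ w) * (starRingEnd ℂ) (∑ w ∈ T, g w * ψ w)) =
      (Fintype.card G : ℂ) * ∑ w ∈ T, g w * (starRingEnd ℂ) (g w) := by
    have expand : ∀ ψ : AddChar G ℂ,
        (∑ w ∈ T, g w * ψ w) * (starRingEnd ℂ) (∑ w ∈ T, g w * ψ w) =
        ∑ w ∈ T, ∑ w' ∈ T, (g w * (starRingEnd ℂ) (g w')) * ψ (w - w') := by
      intro ψ
      rw [map_sum, Finset.sum_mul_sum]
      refine Finset.sum_congr rfl fun w hw => Finset.sum_congr rfl fun w' hw' => ?_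
      rw [map_mul, sub_eq_add_neg, AddChar.map_add_eq_mul, AddChar.map_neg_eq_conj]
      ring
    simp_rw [expand]
    rw [Finset.sum_comm]
    have inner : ∀ w ∈ T, ∑ ψ : AddChar G ℂ, ∑ w' ∈ T, (g w * (starRingEnd ℂ) (g w')) * ψ (w - w')
        = (g w * (starRingEnd ℂ) (g w)) * (Fintype.card G : ℂ) := by
      intro w hw
      rw [Finset.sum_comm]
      have : ∀ w' ∈ T, ∑ ψ : AddChar G ℂ, (g w * (starRingEnd ℂ) (g w')) * ψ (w - w')
          = if w = w' then (g w * (starRingEnd ℂ) (g w')) * (Fintype.card G : ℂ) else 0 := by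
        intro w' hw'
        rw [← Finset.mul_sum, AddChar.sum_apply_eq_ite]
        simp only [sub_eq_zero]
        split <;> simp
      rw [Finset.sum_congr rfl this, Finset.sum_ite_eq, if_pos hw]
    rw [Finset.sum_congr rfl inner, ← Finset.sum_mul]
    ring
  simp_rw [Complex.mul_conj] at key
  exact_mod_cast key

/-- Fourier expansion of the trilinear form. -/
lemma trilinear_fourier {G : Type*} [AddCommGroup G] [Fintype G] [DecidableEq G]
    (Bf Bf' Cf : Finset G)
    (hsub : ∀ z ∈ Bf', ∀ x ∈ Bf, z + x ∈ Cf) (f b₁ b₂ : G → ℂ) :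
    (Fintype.card G : ℂ) * ∑ z ∈ Bf', ∑ x ∈ Bf, f z * b₁ x * b₂ (z + x) =
      ∑ ψ : AddChar G ℂ, (∑ w ∈ Cf, b₂ w * (starRingEnd ℂ) (ψ w)) *
        ((∑ z ∈ Bf', f z * ψ z) * (∑ x ∈ Bf, b₁ x * ψ x)) := by
  have expand : ∀ ψ : AddChar G ℂ,
      (∑ w ∈ Cf, b₂ w * (starRingEnd ℂ) (ψ w)) *
        ((∑ z ∈ Bf', f z * ψ z) * (∑ x ∈ Bf, b₁ x * ψ x)) =
      ∑ w ∈ Cf, ∑ z ∈ Bf', ∑ x ∈ Bf, (b₂ w * f z * b₁ x) * ψ (z + x - w) := by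
    intro ψ
    rw [Finset.sum_mul_sum, Finset.sum_mul]
    refine Finset.sum_congr rfl fun w hw => ?_
    rw [Finset.mul_sum]
    refine Finset.sum_congr rfl fun z hz => ?_
    rw [Finset.mul_sum]
    refine Finset.sum_congr rfl fun x hx => ?_
    rw [sub_eq_add_neg, AddChar.map_add_eq_mul, AddChar.map_add_eq_mul,
      AddChar.map_neg_eq_conj]
    ring
  simp_rw [expand]
  conv_rhs => rw [Finset.sum_comm]
  have inner : ∀ w ∈ Cf, ∑ ψ : AddChar G ℂ, ∑ z ∈ Bf', ∑ x ∈ Bf,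
      (b₂ w * f z * b₁ x) * ψ (z + x - w)
      = ∑ z ∈ Bf', ∑ x ∈ Bf,
          if z + x = w then (b₂ w * f z * b₁ x) * (Fintype.card G : ℂ) else 0 := by
    intro w hw
    rw [Finset.sum_comm]
    refine Finset.sum_congr rfl fun z hz => ?_
    rw [Finset.sum_comm]
    refine Finset.sum_congr rfl fun x hx => ?_
    rw [← Finset.mul_sum, AddChar.sum_apply_eq_ite]
    simp only [sub_eq_zero]
    split <;> simp
  rw [Finset.sum_congr rfl inner]
  conv_rhs => rw [Finset.sum_comm]
  rw [Finset.mul_sum]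
  refine Finset.sum_congr rfl fun z hz => ?_
  conv_rhs => rw [Finset.sum_comm]
  rw [Finset.mul_sum]
  refine Finset.sum_congr rfl fun x hx => ?_
  rw [Finset.sum_ite_eq Cf (z + x) (fun w => (b₂ w * f z * b₁ x) * (Fintype.card G : ℂ)),
    if_pos (hsub z hz x hx)]
  ring

/-- Every complex character of a finite abelian group comes from a homomorphism to `ℝ/ℤ`. -/
lemma exists_xi {G : Type*} [AddCommGroup G] [Finite G] (ψ₀ : AddChar G ℂ) :
    ∃ ξ : G →+ AddCircle (1 : ℝ), ∀ z, ee (-(ξ z)) = ψ₀ z := by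
  set ψc := AddChar.circleEquivComplex.symm ψ₀ with hψcdef
  have hcoe : ∀ z, (ψc z : ℂ) = ψ₀ z := by
    intro z
    conv_rhs => rw [← AddChar.circleEquivComplex.apply_symm_apply ψ₀]
    rfl
  have htc : ∀ c : Circle,
      AddCircle.toCircle ((AddCircle.homeomorphCircle (one_ne_zero (α := ℝ))).symm c) = c := by
    intro c
    rw [← AddCircle.homeomorphCircle_apply]
    exact Homeomorph.apply_symm_apply _ c
  let ξ : G →+ AddCircle (1 : ℝ) :=
    { toFun := fun z => (AddCircle.homeomorphCircle (one_ne_zero (α := ℝ))).symm (ψc (-z))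
      map_zero' := by
        apply AddCircle.injective_toCircle (one_ne_zero (α := ℝ))
        rw [htc]
        simp
      map_add' := by
        intro a b
        apply AddCircle.injective_toCircle (one_ne_zero (α := ℝ))
        rw [AddCircle.toCircle_add, htc, htc, htc, neg_add, AddChar.map_add_eq_mul] }
  refine ⟨ξ, fun z => ?_⟩
  have hz : AddCircle.toCircle (ξ z) = ψc (-z) := htc _
  have h1 : AddCircle.toCircle (-(ξ z)) = (AddCircle.toCircle (ξ z))⁻¹ := by
    have h2 := AddCircle.toCircle_add (-(ξ z)) (ξ z)
    rw [neg_add_cancel, AddCircle.toCircle_zero] at h2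
    exact eq_inv_of_mul_eq_one_left h2.symm
  show (AddCircle.toCircle (-(ξ z)) : ℂ) = ψ₀ z
  rw [h1, hz, AddChar.map_neg_eq_inv, inv_inv]
  exact hcoe z

/-- **Large trilinear form implies correlation with a linear phase**: for nonempty
`B, B' ⊆ G`, any `f : G → ℂ` and any `1`-bounded `b₁, b₂ : G → ℂ` there is a character
`ξ ∈ Ĝ` with
`|𝔼_{z ∈ B'} f(z) e(-ξ·z)| ≥ (|B|/|B+B'|) · |𝔼_{z ∈ B', x ∈ B} f(z) b₁(x) b₂(z+x)|`. -/
theorem trilinear_implies_linear_correlation {G : Type*} [AddCommGroup G] [Fintype G]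
    (B B' : Set G) (hB : B.Nonempty) (hB' : B'.Nonempty)
    (f b₁ b₂ : G → ℂ)
    (hb₁ : ∀ x, ‖b₁ x‖ ≤ 1) (hb₂ : ∀ x, ‖b₂ x‖ ≤ 1) :
    ∃ ξ : G →+ AddCircle (1 : ℝ),
      ((B.ncard : ℝ) / ((B + B').ncard : ℝ)) *
          ‖(B'.ncard : ℂ)⁻¹ * (B.ncard : ℂ)⁻¹ *
            ∑ z ∈ B'.toFinite.toFinset, ∑ x ∈ B.toFinite.toFinset,
              f z * b₁ x * b₂ (z + x)‖ ≤
        ‖expectC B' (fun z => f z * ee (-(ξ z)))‖ := by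
  classical
  obtain ⟨z₀, hz₀⟩ := hB'
  obtain ⟨x₀, hx₀⟩ := hB
  set Bf := B.toFinite.toFinset with hBfdef
  set Bf' := B'.toFinite.toFinset with hBf'def
  set Cf := (B + B').toFinite.toFinset with hCfdef
  have hmBf : ∀ x, x ∈ Bf ↔ x ∈ B := fun x => Set.Finite.mem_toFinset _
  have hmBf' : ∀ x, x ∈ Bf' ↔ x ∈ B' := fun x => Set.Finite.mem_toFinset _
  have hmCf : ∀ x, x ∈ Cf ↔ x ∈ B + B' := fun x => Set.Finite.mem_toFinset _
  have hsub : ∀ z ∈ Bf', ∀ x ∈ Bf, z + x ∈ Cf := by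
    intro z hz x hx
    rw [hmCf, add_comm z x]
    exact Set.add_mem_add ((hmBf x).1 hx) ((hmBf' z).1 hz)
  have hBcard : (B.ncard : ℝ) = (Bf.card : ℝ) := by
    rw [Set.ncard_eq_toFinset_card B B.toFinite]
  have hB'card : (B'.ncard : ℝ) = (Bf'.card : ℝ) := by
    rw [Set.ncard_eq_toFinset_card B' B'.toFinite]
  have hCcard : ((B + B').ncard : ℝ) = (Cf.card : ℝ) := by
    rw [Set.ncard_eq_toFinset_card (B + B') (B + B').toFinite]
  have hBcardC : (B.ncard : ℂ) = (Bf.card : ℂ) := by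
    rw [Set.ncard_eq_toFinset_card B B.toFinite]
  have hB'cardC : (B'.ncard : ℂ) = (Bf'.card : ℂ) := by
    rw [Set.ncard_eq_toFinset_card B' B'.toFinite]
  have hb0 : 0 < Bf.card := Finset.card_pos.2 ⟨x₀, (hmBf x₀).2 hx₀⟩
  have hb'0 : 0 < Bf'.card := Finset.card_pos.2 ⟨z₀, (hmBf' z₀).2 hz₀⟩
  have hc0 : 0 < Cf.card := Finset.card_pos.2 ⟨z₀ + x₀, hsub z₀ ((hmBf' z₀).2 hz₀) x₀
    ((hmBf x₀).2 hx₀)⟩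
  have hBC : Bf.card ≤ Cf.card := by
    refine Finset.card_le_card_of_injOn (fun x => x + z₀) ?_ ?_
    · intro x hx
      exact (hmCf _).2 (Set.add_mem_add ((hmBf x).1 hx) hz₀)
    · intro a _ b _ h
      exact add_right_cancel h
  -- the linear phases
  set F : AddChar G ℂ → ℂ := fun ψ => ∑ z ∈ Bf', f z * ψ z with hFdef
  set A : AddChar G ℂ → ℂ := fun ψ => ∑ x ∈ Bf, b₁ x * ψ x with hAdef
  set c : AddChar G ℂ → ℂ := fun ψ => ∑ w ∈ Cf, b₂ w * (starRingEnd ℂ) (ψ w) with hcdef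
  obtain ⟨ψ₀, -, hψ₀⟩ := Finset.exists_max_image (Finset.univ : Finset (AddChar G ℂ))
    (fun ψ => ‖F ψ‖) ⟨1, Finset.mem_univ 1⟩
  set M := ‖F ψ₀‖ with hMdef
  have hM : ∀ ψ : AddChar G ℂ, ‖F ψ‖ ≤ M := fun ψ => hψ₀ ψ (Finset.mem_univ ψ)
  have hM0 : 0 ≤ M := norm_nonneg _
  obtain ⟨ξ, hξ⟩ := exists_xi ψ₀
  set S := ∑ z ∈ Bf', ∑ x ∈ Bf, f z * b₁ x * b₂ (z + x) with hSdef
  set N := Fintype.card G with hNdef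
  have hN0 : 0 < N := Fintype.card_pos
  -- the key identity and resulting bound
  have key : (N : ℂ) * S = ∑ ψ : AddChar G ℂ, c ψ * (F ψ * A ψ) :=
    trilinear_fourier Bf Bf' Cf hsub f b₁ b₂
  have habs : (N : ℝ) * ‖S‖ ≤ M * ∑ ψ : AddChar G ℂ,
      ‖c ψ‖ * ‖A ψ‖ := by
    have h1 : (N : ℝ) * ‖S‖ = ‖(N : ℂ) * S‖ := by
      rw [norm_mul, Complex.norm_natCast]
    rw [h1, key]
    calc ‖∑ ψ : AddChar G ℂ, c ψ * (F ψ * A ψ)‖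
        ≤ ∑ ψ : AddChar G ℂ, ‖c ψ * (F ψ * A ψ)‖ :=
          norm_sum_le _ _
      _ ≤ ∑ ψ : AddChar G ℂ, M * (‖c ψ‖ * ‖A ψ‖) := by
          refine Finset.sum_le_sum fun ψ _ => ?_
          rw [norm_mul, norm_mul]
          have := hM ψ
          have h2 : ‖c ψ‖ * (‖F ψ‖ * ‖A ψ‖)
              ≤ ‖c ψ‖ * (M * ‖A ψ‖) := by
            refine mul_le_mul_of_nonneg_left ?_ (norm_nonneg _)
            exact mul_le_mul_of_nonneg_right this (norm_nonneg _)
          calc ‖c ψ‖ * (‖F ψ‖ * ‖A ψ‖)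
              ≤ ‖c ψ‖ * (M * ‖A ψ‖) := h2
            _ = M * (‖c ψ‖ * ‖A ψ‖) := by ring
      _ = M * ∑ ψ : AddChar G ℂ, ‖c ψ‖ * ‖A ψ‖ := by
          rw [Finset.mul_sum]
  -- Parseval bounds
  have hc2 : ∑ ψ : AddChar G ℂ, ‖c ψ‖ ^ 2 ≤ (N : ℝ) * Cf.card := by
    have hrw : ∀ ψ : AddChar G ℂ, ‖c ψ‖ ^ 2 =
        Complex.normSq (∑ w ∈ Cf, (starRingEnd ℂ) (b₂ w) * ψ w) := by
      intro ψ
      rw [Complex.sq_norm]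
      have : c ψ = (starRingEnd ℂ) (∑ w ∈ Cf, (starRingEnd ℂ) (b₂ w) * ψ w) := by
        rw [map_sum]
        refine Finset.sum_congr rfl fun w hw => ?_
        rw [map_mul, Complex.conj_conj]
      rw [this, Complex.normSq_conj]
    simp_rw [hrw]
    rw [parseval_aux Cf (fun w => (starRingEnd ℂ) (b₂ w))]
    have : ∑ w ∈ Cf, Complex.normSq ((starRingEnd ℂ) (b₂ w)) ≤ (Cf.card : ℝ) := by
      calc ∑ w ∈ Cf, Complex.normSq ((starRingEnd ℂ) (b₂ w)) ≤ ∑ w ∈ Cf, 1 := by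
            refine Finset.sum_le_sum fun w _ => ?_
            rw [Complex.normSq_conj, ← Complex.sq_norm]
            have := hb₂ w
            nlinarith [norm_nonneg (b₂ w)]
        _ = (Cf.card : ℝ) := by simp
    have hN0' : (0:ℝ) ≤ (N : ℝ) := Nat.cast_nonneg _
    nlinarith
  have ha2 : ∑ ψ : AddChar G ℂ, ‖A ψ‖ ^ 2 ≤ (N : ℝ) * Cf.card := by
    have hrw : ∀ ψ : AddChar G ℂ, ‖A ψ‖ ^ 2 =
        Complex.normSq (∑ x ∈ Bf, b₁ x * ψ x) := fun ψ => Complex.sq_norm _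
    simp_rw [hrw]
    rw [parseval_aux Bf b₁]
    have h1 : ∑ x ∈ Bf, Complex.normSq (b₁ x) ≤ (Bf.card : ℝ) := by
      calc ∑ x ∈ Bf, Complex.normSq (b₁ x) ≤ ∑ x ∈ Bf, 1 := by
            refine Finset.sum_le_sum fun x _ => ?_
            rw [← Complex.sq_norm]
            have := hb₁ x
            nlinarith [norm_nonneg (b₁ x)]
        _ = (Bf.card : ℝ) := by simp
    have h2 : (Bf.card : ℝ) ≤ (Cf.card : ℝ) := Nat.cast_le.2 hBC
    have hN0' : (0:ℝ) ≤ (N : ℝ) := Nat.cast_nonneg _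
    nlinarith
  -- Cauchy–Schwarz
  have hCS : ∑ ψ : AddChar G ℂ, ‖c ψ‖ * ‖A ψ‖ ≤ (N : ℝ) * Cf.card := by
    have h1 := Finset.sum_mul_sq_le_sq_mul_sq Finset.univ
      (fun ψ : AddChar G ℂ => ‖c ψ‖) (fun ψ => ‖A ψ‖)
    have h2 : 0 ≤ ∑ ψ : AddChar G ℂ, ‖c ψ‖ * ‖A ψ‖ :=
      Finset.sum_nonneg fun ψ _ => mul_nonneg (norm_nonneg _) (norm_nonneg _)
    have h3 : (0:ℝ) ≤ (N : ℝ) * Cf.card :=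
      mul_nonneg (Nat.cast_nonneg _) (Nat.cast_nonneg _)
    nlinarith [mul_le_mul hc2 ha2 (Finset.sum_nonneg fun ψ _ => sq_nonneg
      (‖A ψ‖)) (le_trans (Finset.sum_nonneg fun ψ _ => sq_nonneg
      (‖c ψ‖)) hc2)]
  -- conclude |S| ≤ M * |Cf|
  have hS : ‖S‖ ≤ M * Cf.card := by
    have h1 : (N : ℝ) * ‖S‖ ≤ (N : ℝ) * (M * Cf.card) := by
      calc (N : ℝ) * ‖S‖ ≤ M * ∑ ψ : AddChar G ℂ,
            ‖c ψ‖ * ‖A ψ‖ := habs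
        _ ≤ M * ((N : ℝ) * Cf.card) := mul_le_mul_of_nonneg_left hCS hM0
        _ = (N : ℝ) * (M * Cf.card) := by ring
    have hN0' : (0:ℝ) < (N : ℝ) := Nat.cast_pos.2 hN0
    exact le_of_mul_le_mul_left h1 hN0'
  -- wrap up
  refine ⟨ξ, ?_⟩
  have hRHS : (expectC B' fun z => f z * ee (-(ξ z))) = (B'.ncard : ℂ)⁻¹ * F ψ₀ := by
    rw [expectC]
    congr 1
    refine Finset.sum_congr rfl fun z hz => ?_
    rw [hξ z]
  rw [hRHS, hB'cardC, hBcardC, hBcard, hCcard]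
  rw [norm_mul, norm_mul, norm_mul, norm_inv, norm_inv, Complex.norm_natCast, Complex.norm_natCast]
  set s := ‖S‖ with hs
  have hs0 : 0 ≤ s := norm_nonneg _
  set b : ℝ := (Bf.card : ℝ) with hb
  set b' : ℝ := (Bf'.card : ℝ) with hb'
  set cc : ℝ := (Cf.card : ℝ) with hcc
  have hbp : 0 < b := Nat.cast_pos.2 hb0
  have hb'p : 0 < b' := Nat.cast_pos.2 hb'0
  have hccp : 0 < cc := Nat.cast_pos.2 hc0
  have hscale : b / cc * (b'⁻¹ * b⁻¹ * s) = s / (cc * b') := by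
    have h1 : b / cc * (b'⁻¹ * b⁻¹ * s) = (b * b⁻¹) * (s * (cc⁻¹ * b'⁻¹)) := by
      rw [div_eq_mul_inv]; ring
    rw [h1, mul_inv_cancel₀ (ne_of_gt hbp), one_mul, div_eq_mul_inv, mul_inv]
  rw [hscale, div_le_iff₀ (mul_pos hccp hb'p)]
  have hfin : b'⁻¹ * M * (cc * b') = M * cc := by
    have h1 : b'⁻¹ * M * (cc * b') = (b'⁻¹ * b') * (M * cc) := by ring
    rw [h1, inv_mul_cancel₀ (ne_of_gt hb'p), one_mul]
  rw [hfin]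
  calc s ≤ M * cc := hS
    _ = M * cc := rfl
end

section
/- Gauss sum lemma: Let F be a finite field of odd characteristic, let W be a finite-dimensional vector space over F with dim W ≥ 3, and let M : W → Ŵ be a self-adjoint homomorphism, i.e. an additive homomorphism from W to its dual group Ŵ satisfying Mx·y = My·x for all x, y ∈ W. Then there exists a nonzero x ∈ W with Mx·x = 0. -/
/-- **Gauss sum lemma**: let `F` be a finite field of odd characteristic, `W` a vector
space over `F` with `dim W ≥ 3`, and `M : W → Ŵ` a self-adjoint homomorphism into the dual
group `Ŵ` of homomorphisms `W → ℝ/ℤ` (i.e. `Mx·y = My·x` for all `x,y`). Then there is a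
nonzero `x ∈ W` with `Mx·x = 0`. -/
theorem gauss_sum_lemma (F : Type*) [Field F] [Fintype F] (hchar : Odd (ringChar F))
    (W : Type*) [AddCommGroup W] [Module F W] [FiniteDimensional F W]
    (hdim : 3 ≤ Module.finrank F W)
    (M : W →+ (W →+ AddCircle (1 : ℝ))) (hM : ∀ x y : W, M x y = M y x) :
    ∃ x : W, x ≠ 0 ∧ M x x = 0 := by
  classical
  set p := ringChar F with hpdef
  haveI : CharP F p := ringChar.charP F
  have hp : p.Prime := CharP.char_is_prime F p
  haveI : Fact p.Prime := ⟨hp⟩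
  have hppos : 0 < p := hp.pos
  have hpR : (p : ℝ) ≠ 0 := by positivity
  -- W is p-torsion
  have hWtor : ∀ x : W, p • x = 0 := fun x => by
    rw [← Nat.cast_smul_eq_nsmul F, CharP.cast_eq_zero, zero_smul]
  haveI : Module (ZMod p) W := AddCommGroup.zmodModule hWtor
  have hsmul : ∀ (c : ZMod p) (x : W), c • x = c.val • x := fun c x => by
    conv_lhs => rw [← ZMod.natCast_rightInverse c]
    rw [Nat.cast_smul_eq_nsmul]
  -- the embedding ψ : ZMod p → ℝ/ℤ
  set a : AddCircle (1 : ℝ) := (((p : ℝ)⁻¹ : ℝ) : AddCircle (1:ℝ)) with ha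
  have hpa : (zmultiplesHom (AddCircle (1 : ℝ)) a) (p : ℤ) = 0 := by
    show (p : ℤ) • a = 0
    rw [ha, ← AddCircle.coe_zsmul]
    have h1 : ((p : ℤ) • ((p:ℝ)⁻¹) : ℝ) = 1 := by
      rw [zsmul_eq_mul]; push_cast; field_simp
    rw [h1]
    exact AddCircle.coe_period 1
  set ψ : ZMod p →+ AddCircle (1 : ℝ) := ZMod.lift p ⟨zmultiplesHom _ a, hpa⟩ with hψdef
  have hψ : ∀ m : ℤ, ψ (m : ZMod p) = ((m * (p : ℝ)⁻¹ : ℝ) : AddCircle (1:ℝ)) := by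
    intro m
    rw [hψdef, ZMod.lift_coe]
    show m • a = _
    rw [ha, ← AddCircle.coe_zsmul, zsmul_eq_mul]
  have hψinj : Function.Injective ψ := by
    rw [injective_iff_map_eq_zero]
    intro k hk
    have hkc : ((k.val : ℤ) : ZMod p) = k := by
      push_cast
      exact ZMod.natCast_rightInverse k
    rw [← hkc, hψ] at hk
    rw [AddCircle.coe_eq_zero_iff] at hk
    obtain ⟨n, hn⟩ := hk
    rw [zsmul_eq_mul, mul_one] at hn
    have hval : ((k.val : ℤ)) = n * p := by
      have h2 : ((k.val : ℤ) : ℝ) = ((n * p : ℤ) : ℝ) := by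
        push_cast
        rw [hn]
        field_simp
        norm_cast
      exact_mod_cast h2
    have hdvd : p ∣ k.val := by
      have : (p:ℤ) ∣ (k.val : ℤ) := ⟨n, by linarith [hval]⟩
      exact_mod_cast this
    have hv0 : k.val = 0 := Nat.eq_zero_of_dvd_of_lt hdvd (ZMod.val_lt k)
    exact (ZMod.val_eq_zero k).mp hv0
  -- every p-torsion element of the circle is in the range of ψ
  have hsurj : ∀ z : AddCircle (1 : ℝ), p • z = 0 → ∃ k : ZMod p, ψ k = z := by
    intro z hz
    induction z using QuotientAddGroup.induction_on with
    | H r => ?_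
    rw [← AddCircle.coe_nsmul, nsmul_eq_mul, AddCircle.coe_eq_zero_iff] at hz
    obtain ⟨n, hn⟩ := hz
    rw [zsmul_eq_mul, mul_one] at hn
    refine ⟨(n : ZMod p), ?_⟩
    rw [hψ]
    congr 1
    rw [hn]
    field_simp
  -- the bilinear form with values in ZMod p
  have hBex : ∀ x y : W, ∃ k : ZMod p, ψ k = M x y := by
    intro x y
    apply hsurj
    have h1 : p • (M x y) = M (p • x) y := by
      rw [map_nsmul]; rfl
    rw [h1, hWtor, map_zero, AddMonoidHom.zero_apply]
  choose B hB using hBex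
  have hBadd₂ : ∀ x y y' : W, B x (y + y') = B x y + B x y' := by
    intro x y y'
    apply hψinj
    rw [map_add, hB, hB, hB, map_add]
  have hBadd₁ : ∀ x x' y : W, B (x + x') y = B x y + B x' y := by
    intro x x' y
    apply hψinj
    rw [map_add, hB, hB, hB, map_add, AddMonoidHom.add_apply]
  -- package as a ZMod p bilinear map
  let g : W →+ (W →+ ZMod p) :=
    AddMonoidHom.mk' (fun x => AddMonoidHom.mk' (fun y => B x y) (hBadd₂ x))
      (fun x x' => by ext y; exact hBadd₁ x x' y)
  let L : W →ₗ[ZMod p] W →ₗ[ZMod p] ZMod p :=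
    (AddMonoidHom.mk' (fun x => (g x).toZModLinearMap p)
      (fun x x' => LinearMap.ext fun y => by
        show B (x + x') y = B x y + B x' y
        exact hBadd₁ x x' y)).toZModLinearMap p
  have hL : ∀ x y, L x y = B x y := fun x y => rfl
  -- dimension over ZMod p
  haveI : Finite W := Module.finite_of_finite F
  haveI : Module.Finite (ZMod p) W := Module.Finite.of_finite
  have hdimZ : 3 ≤ Module.finrank (ZMod p) W := by
    let bF := Module.finBasis F W
    let e : Fin 3 → W := fun i => bF (Fin.castLE hdim i)
    have heF : LinearIndependent F e :=
      bF.linearIndependent.comp _ (Fin.castLE_injective hdim)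
    have heZ : LinearIndependent (ZMod p) e := by
      rw [Fintype.linearIndependent_iff] at heF ⊢
      intro c hc i
      have h1 : ∑ j, (((c j).val : F)) • e j = 0 := by
        rw [← hc]
        congr 1
        ext j
        rw [hsmul, Nat.cast_smul_eq_nsmul]
      have h2 := heF _ h1 i
      rw [CharP.cast_eq_zero_iff F p] at h2
      have hv0 : (c i).val = 0 := Nat.eq_zero_of_dvd_of_lt h2 (ZMod.val_lt _)
      exact (ZMod.val_eq_zero _).mp hv0
    have h3 : Fintype.card (Fin 3) ≤ Module.finrank (ZMod p) W :=
      LinearIndependent.fintype_card_le_finrank heZ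
    simpa using h3
  set n := Module.finrank (ZMod p) W with hn
  let b : Module.Basis (Fin n) (ZMod p) W := Module.finBasis (ZMod p) W
  -- the quadratic polynomial
  let f : MvPolynomial (Fin n) (ZMod p) :=
    ∑ i, ∑ j, MvPolynomial.C (B (b i) (b j)) * MvPolynomial.X i * MvPolynomial.X j
  have hdeg : f.totalDegree ≤ 2 := by
    refine (MvPolynomial.totalDegree_finset_sum _ _).trans (Finset.sup_le fun i _ => ?_)
    refine (MvPolynomial.totalDegree_finset_sum _ _).trans (Finset.sup_le fun j _ => ?_)
    calc (MvPolynomial.C (B (b i) (b j)) * MvPolynomial.X i * MvPolynomial.X j).totalDegree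
        ≤ (MvPolynomial.C (B (b i) (b j)) * MvPolynomial.X i).totalDegree
            + (MvPolynomial.X j : MvPolynomial (Fin n) (ZMod p)).totalDegree :=
          MvPolynomial.totalDegree_mul _ _
      _ ≤ ((MvPolynomial.C (B (b i) (b j)) : MvPolynomial (Fin n) (ZMod p)).totalDegree
            + (MvPolynomial.X i : MvPolynomial (Fin n) (ZMod p)).totalDegree) + 1 := by
          gcongr
          · exact MvPolynomial.totalDegree_mul _ _
          · exact (MvPolynomial.totalDegree_X j).le
      _ ≤ 2 := by
          rw [MvPolynomial.totalDegree_C, MvPolynomial.totalDegree_X]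
  have hlt : f.totalDegree < Fintype.card (Fin n) := by
    rw [Fintype.card_fin]
    omega
  have hdvd := char_dvd_card_solutions p hlt
  have h0sol : MvPolynomial.eval (0 : Fin n → ZMod p) f = 0 := by
    simp [f]
  have hcard : 1 < Fintype.card { x : (Fin n) → ZMod p // MvPolynomial.eval x f = 0 } := by
    have hpos : 0 < Fintype.card { x : (Fin n) → ZMod p // MvPolynomial.eval x f = 0 } :=
      Fintype.card_pos_iff.mpr ⟨⟨0, h0sol⟩⟩
    have hle : p ≤ Fintype.card { x : (Fin n) → ZMod p // MvPolynomial.eval x f = 0 } :=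
      Nat.le_of_dvd hpos hdvd
    have hp2 := hp.two_le
    omega
  obtain ⟨⟨c, hc⟩, hne⟩ := Fintype.exists_ne_of_one_lt_card hcard ⟨0, h0sol⟩
  have hc0 : c ≠ 0 := fun h => hne (by simp [h])
  -- the witness
  set v : W := ∑ i, c i • b i with hv
  have hvne : v ≠ 0 := by
    intro h
    apply hc0
    have := b.repr_sum_self c
    rw [← hv, h, map_zero] at this
    funext i
    exact (congrFun this i).symm
  refine ⟨v, hvne, ?_⟩
  have hLvv : L v v = 0 := by
    have hexp : L v v = ∑ i, ∑ j, c i * (c j * L (b i) (b j)) := by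
      simp only [hv, map_sum, LinearMap.sum_apply, map_smul, LinearMap.smul_apply,
        smul_eq_mul, Finset.mul_sum]
      rw [Finset.sum_comm]
      exact Finset.sum_congr rfl fun i _ => Finset.sum_congr rfl fun j _ => by ring
    have heval : MvPolynomial.eval c f = ∑ i, ∑ j, B (b i) (b j) * c i * c j := by
      simp [f]
    rw [heval] at hc
    rw [hexp, ← hc]
    refine Finset.sum_congr rfl fun i _ => Finset.sum_congr rfl fun j _ => ?_
    rw [hL]
    ring
  have hBvv : B v v = 0 := by rw [← hL]; exact hLvv
  rw [← hB, hBvv, map_zero]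
end
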